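/- arXiv:2112.04872 — 6 statements merged into one kernel-verified Lean document; each statement's English description precedes it below -/
import Mathlib

section
/- There is a bijection between rook placements on the double staircase 2δ_n and increasing binary trees on n+1 vertices labeled by {1,...,n+1}, given by: the root is labeled 1, and for each block i (the pair of columns 2i-1, 2i), if the left (resp. right) column of block i contains a rook in row j then vertex i has left (resp. right) child labeled j+1, and no left (resp. right) child if that column is empty. -/
/-- Rook placements on the double staircase `2δ_n`: one rook per row (row `i`,
numbered from the top starting at `0`, has `2*(i+1)` cells), at most one rook
per column. -/
def RookPlacement (n : ℕ) :=
  {r : Fin n → Fin (2 * n) //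
    Function.Injective r ∧ ∀ i : Fin n, (r i : ℕ) < 2 * (i.val + 1)}

/-- Increasing binary trees on `n+1` vertices `0, …, n` (vertex `i` carries
label `i+1`): each vertex has at most one left child (`false`) and at most one
right child (`true`), children have larger labels than their parent, and every
non-root vertex has a unique parent. -/
def IncBinTree (n : ℕ) :=
  {c : Fin (n + 1) → Bool → Option (Fin (n + 1)) //
    (∀ u b v, c u b = some v → u < v) ∧
    (∀ v : Fin (n + 1), v ≠ 0 → ∃! p : Fin (n + 1) × Bool, c p.1 p.2 = some v)}

namespace RookTreeAux

variable {n : ℕ}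

def bit (b : Bool) : ℕ := if b then 1 else 0

lemma bit_lt (b : Bool) : bit b < 2 := by cases b <;> simp [bit]

lemma bit_inj {b b' : Bool} (h : bit b = bit b') : b = b' := by
  cases b <;> cases b' <;> simp [bit] at h ⊢

/-- The child function of the tree associated to a rook placement. -/
noncomputable def tf (R : RookPlacement n) (u : Fin (n + 1)) (b : Bool) : Option (Fin (n + 1)) :=
  if h : ∃ j : Fin n, (R.1 j : ℕ) = 2 * u.val + bit b then some h.choose.succ else none

lemma tf_eq_some (R : RookPlacement n) (u v : Fin (n + 1)) (b : Bool) :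
    tf R u b = some v ↔
      ∃ j : Fin n, (R.1 j : ℕ) = 2 * u.val + bit b ∧ v.val = j.val + 1 := by
  unfold tf
  split_ifs with h
  · simp only [Option.some_inj]
    constructor
    · rintro rfl
      exact ⟨h.choose, h.choose_spec, by simp⟩
    · rintro ⟨j, hj, hv⟩
      have hcj : h.choose = j := R.2.1 (Fin.ext (by rw [h.choose_spec, hj]))
      apply Fin.ext
      simp [hv, ← hcj]
  · constructor
    · intro hc; exact absurd hc (by simp)
    · rintro ⟨j, hj, _⟩; exact absurd ⟨j, hj⟩ h

noncomputable def toTree (R : RookPlacement n) : IncBinTree n :=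
  ⟨tf R, by
    intro u b v h
    rw [tf_eq_some] at h
    obtain ⟨j, hj, hv⟩ := h
    have h2 := R.2.2 j
    have hb := bit_lt b
    exact Fin.lt_def.mpr (by omega),
   by
    intro v hv
    have hv0 : v.val ≠ 0 := fun h => hv (Fin.ext (by simpa using h))
    have hvlt := v.2
    have hvn : v.val - 1 < n := by omega
    set j : Fin n := ⟨v.val - 1, hvn⟩ with hjdef
    set m := (R.1 j).val with hm
    have hmlt : m < 2 * n := (R.1 j).2
    have hbitdec : bit (decide (m % 2 = 1)) = m % 2 := by
      rcases Nat.mod_two_eq_zero_or_one m with h | h <;> simp [bit, h]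
    refine ⟨(⟨m / 2, by omega⟩, decide (m % 2 = 1)), ?_, ?_⟩
    · dsimp only
      rw [tf_eq_some]
      refine ⟨j, ?_, by simp [hjdef]; omega⟩
      show m = 2 * (m / 2) + bit (decide (m % 2 = 1))
      simp only [hbitdec]
      omega
    · rintro ⟨u', b'⟩ h'
      dsimp only at h' ⊢
      rw [tf_eq_some] at h'
      obtain ⟨j', hj', hv'⟩ := h'
      have hj'j : j' = j := Fin.ext (by simp [hjdef]; omega)
      subst hj'j
      have hb' := bit_lt b'
      rw [← hm] at hj'
      have h1 : u'.val = m / 2 := by omega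
      have h2 : bit b' = m % 2 := by omega
      have h3 : b' = decide (m % 2 = 1) := bit_inj (by rw [h2, hbitdec])
      exact Prod.ext (Fin.ext h1) h3⟩

/-- The (unique) parent of vertex `j+1` in an increasing binary tree. -/
noncomputable def parent (T : IncBinTree n) (j : Fin n) : Fin (n + 1) × Bool :=
  (T.2.2 j.succ (Fin.succ_ne_zero j)).choose

lemma parent_spec (T : IncBinTree n) (j : Fin n) :
    T.1 (parent T j).1 (parent T j).2 = some j.succ :=
  (T.2.2 j.succ (Fin.succ_ne_zero j)).choose_spec.1

lemma parent_unique (T : IncBinTree n) (j : Fin n) (p : Fin (n + 1) × Bool)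
    (h : T.1 p.1 p.2 = some j.succ) : p = parent T j :=
  (T.2.2 j.succ (Fin.succ_ne_zero j)).choose_spec.2 p h

lemma parent_le (T : IncBinTree n) (j : Fin n) : (parent T j).1.val ≤ j.val := by
  have h := T.2.1 _ _ _ (parent_spec T j)
  have := Fin.lt_def.mp h
  simpa using Nat.lt_succ_iff.mp (by simpa using this)

noncomputable def ofTree (T : IncBinTree n) : RookPlacement n :=
  ⟨fun j => ⟨2 * (parent T j).1.val + bit (parent T j).2, by
      have h := parent_le T j
      have hb := bit_lt (parent T j).2
      have hj := j.2
      omega⟩, by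
    intro j j' h
    have h' : 2 * (parent T j).1.val + bit (parent T j).2
        = 2 * (parent T j').1.val + bit (parent T j').2 := congrArg Fin.val h
    have hb := bit_lt (parent T j).2
    have hb' := bit_lt (parent T j').2
    have e1 : (parent T j).1 = (parent T j').1 := Fin.ext (by omega)
    have e2 : (parent T j).2 = (parent T j').2 := bit_inj (by omega)
    have hp : parent T j = parent T j' := Prod.ext e1 e2
    have h2 : some (Fin.succ j) = some (Fin.succ j') := by
      rw [← parent_spec T j, hp, parent_spec T j']
    exact Fin.succ_injective _ (Option.some_injective _ h2), by
    intro j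
    have h := parent_le T j
    have hb := bit_lt (parent T j).2
    simpa using by omega⟩

lemma left_inv (R : RookPlacement n) : ofTree (toTree R) = R := by
  apply Subtype.ext
  funext j
  apply Fin.ext
  have hs := parent_spec (toTree R) j
  rw [show (toTree R).1 = tf R from rfl, tf_eq_some] at hs
  obtain ⟨j', hj', hv⟩ := hs
  have hjj : j' = j := Fin.ext (by simp [Fin.val_succ] at hv; omega)
  subst hjj
  exact hj'.symm

lemma right_inv (T : IncBinTree n) : toTree (ofTree T) = T := by
  apply Subtype.ext
  funext u b
  show tf (ofTree T) u b = T.1 u b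
  rcases hT : T.1 u b with _ | v
  · unfold tf
    rw [dif_neg]
    rintro ⟨j, hj⟩
    have hb1 := bit_lt (parent T j).2
    have hb2 := bit_lt b
    have hj' : 2 * (parent T j).1.val + bit (parent T j).2 = 2 * u.val + bit b := hj
    have e1 : (parent T j).1 = u := Fin.ext (by omega)
    have e2 : (parent T j).2 = b := bit_inj (by omega)
    have hps := parent_spec T j
    rw [e1, e2, hT] at hps
    exact Option.some_ne_none _ hps.symm
  · rw [tf_eq_some]
    have hlt := Fin.lt_def.mp (T.2.1 u b v hT)
    have hv0 : 0 < v.val := by omega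
    have hvn : v.val - 1 < n := by have := v.2; omega
    refine ⟨⟨v.val - 1, hvn⟩, ?_, by simp; omega⟩
    set j : Fin n := ⟨v.val - 1, hvn⟩ with hjdef
    have hsucc : Fin.succ j = v := Fin.ext (by simp [Fin.val_succ, hjdef]; omega)
    have hp : (u, b) = parent T j := parent_unique T j (u, b) (by rw [hsucc]; exact hT)
    show 2 * (parent T j).1.val + bit (parent T j).2 = 2 * u.val + bit b
    rw [← hp]

end RookTreeAux

/-- There is a bijection between rook placements on `2δ_n` and increasing
binary trees on `n+1` vertices, given by: the root is (the vertex labelled) `1`,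
and vertex `i` has left (resp. right) child `j+1` exactly when the left
(resp. right) column of block `i` contains a rook in row `j`.
(Here vertices are `0`-indexed: vertex `u : Fin (n+1)` has label `u+1`, block
`u` consists of columns `2u` and `2u+1` (0-indexed), and rows are `0`-indexed.) -/
theorem rook_placements_equiv_increasing_binary_trees (n : ℕ) :
    ∃ e : RookPlacement n ≃ IncBinTree n,
      ∀ (R : RookPlacement n) (u v : Fin (n + 1)) (b : Bool),
        (e R).1 u b = some v ↔
          ∃ j : Fin n, (R.1 j : ℕ) = 2 * u.val + (if b then 1 else 0) ∧
            v.val = j.val + 1 := by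
  refine ⟨⟨RookTreeAux.toTree, RookTreeAux.ofTree,
    RookTreeAux.left_inv, RookTreeAux.right_inv⟩, ?_⟩
  intro R u v b
  exact RookTreeAux.tf_eq_some R u v b
end

section
/- The number of left-aligned rook placements on 2δ_n with exactly k blocks containing one rook equals the number of right-aligned rook placements on 2δ_n with exactly k blocks containing one rook. -/
/-- Column `c` (0-indexed) of the rook placement `R` contains a rook. -/
def Occupied {n : ℕ} (R : RookPlacement n) (c : ℕ) : Prop :=
  ∃ j : Fin n, (R.1 j : ℕ) = c

/-- The number of rooks in block `i` of `R` (block `i` consists of the two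
columns `2i` and `2i+1`, 0-indexed). -/
def blockRooks {n : ℕ} (R : RookPlacement n) (i : Fin n) : ℕ :=
  (Finset.univ.filter (fun j : Fin n => (R.1 j : ℕ) / 2 = i.val)).card

/-- `R` is left-aligned: no block has a rook in its right column without a rook
in its left column. -/
def LeftAligned {n : ℕ} (R : RookPlacement n) : Prop :=
  ∀ i : Fin n, Occupied R (2 * i.val + 1) → Occupied R (2 * i.val)

/-- `R` is right-aligned: no block has a rook in its left column without a rook
in its right column. -/
def RightAligned {n : ℕ} (R : RookPlacement n) : Prop :=
  ∀ i : Fin n, Occupied R (2 * i.val) → Occupied R (2 * i.val + 1)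

/-- `bor R` is the number of blocks of `R` containing exactly one rook. -/
def bor {n : ℕ} (R : RookPlacement n) : ℕ :=
  (Finset.univ.filter (fun i : Fin n => blockRooks R i = 1)).card

namespace RookFlip

def flipc (c : ℕ) : ℕ := if c % 2 = 0 then c + 1 else c - 1

lemma flipc_div (c : ℕ) : flipc c / 2 = c / 2 := by
  unfold flipc; split <;> omega

lemma flipc_flipc (c : ℕ) : flipc (flipc c) = c := by
  unfold flipc; split <;> split <;> omega

lemma flipc_lt {c m : ℕ} (h : c < 2 * m) : flipc c < 2 * m := by
  unfold flipc; split <;> omega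

variable {n : ℕ}

lemma block_lt (R : RookPlacement n) (j : Fin n) : ((R.1 j : ℕ)) / 2 < n := by
  have := (R.1 j).2; omega

/-- flip the rook in every block containing exactly one rook -/
def Fmap (R : RookPlacement n) : RookPlacement n := by
  refine ⟨fun j => if blockRooks R ⟨(R.1 j : ℕ) / 2, block_lt R j⟩ = 1
      then ⟨flipc (R.1 j), flipc_lt (R.1 j).2⟩ else R.1 j, ?_, ?_⟩
  · intro j1 j2 h
    simp only at h
    apply R.2.1
    apply Fin.ext
    rw [Fin.ext_iff] at h
    have hd : (R.1 j1 : ℕ) / 2 = (R.1 j2 : ℕ) / 2 := by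
      split at h <;> split at h <;> (try simp only [Fin.val_mk] at h) <;>
        · have h2 := congrArg (· / 2) h
          simpa only [flipc_div] using h2
    simp only [hd] at h
    split at h
    · simp only [Fin.val_mk] at h
      have := congrArg flipc h
      simpa [flipc_flipc] using this
    · exact h
  · intro j
    simp only
    split
    · simp only [Fin.val_mk]
      have h1 := R.2.2 j
      unfold flipc; split <;> omega
    · exact R.2.2 j

lemma Fmap_val (R : RookPlacement n) (j : Fin n) :
    ((Fmap R).1 j : ℕ) =
      if blockRooks R ⟨(R.1 j : ℕ) / 2, block_lt R j⟩ = 1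
        then flipc (R.1 j : ℕ) else (R.1 j : ℕ) := by
  show ((if blockRooks R ⟨(R.1 j : ℕ) / 2, block_lt R j⟩ = 1
      then (⟨flipc (R.1 j), flipc_lt (R.1 j).2⟩ : Fin (2 * n)) else R.1 j) : Fin (2*n)).val = _
  rw [apply_ite (Fin.val)]

lemma Fmap_div (R : RookPlacement n) (j : Fin n) :
    ((Fmap R).1 j : ℕ) / 2 = (R.1 j : ℕ) / 2 := by
  rw [Fmap_val]; split
  · exact flipc_div _
  · rfl

lemma blockRooks_Fmap (R : RookPlacement n) (i : Fin n) :
    blockRooks (Fmap R) i = blockRooks R i := by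
  unfold blockRooks
  congr 1
  apply Finset.filter_congr
  intro j _
  simp [Fmap_div]

lemma bor_Fmap (R : RookPlacement n) : bor (Fmap R) = bor R := by
  unfold bor
  congr 1
  apply Finset.filter_congr
  intro i _
  simp [blockRooks_Fmap]

lemma Fmap_Fmap (R : RookPlacement n) : Fmap (Fmap R) = R := by
  apply Subtype.ext
  funext j
  apply Fin.ext
  rw [Fmap_val]
  have hb : (⟨((Fmap R).1 j : ℕ) / 2, block_lt (Fmap R) j⟩ : Fin n)
      = ⟨(R.1 j : ℕ) / 2, block_lt R j⟩ := Fin.ext (Fmap_div R j)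
  rw [hb, blockRooks_Fmap, Fmap_val]
  by_cases h : blockRooks R ⟨(R.1 j : ℕ) / 2, block_lt R j⟩ = 1
  · simp [h, flipc_flipc]
  · simp [h]

lemma mem_block {R : RookPlacement n} {i j : Fin n} (h : ((R.1 j : ℕ)) / 2 = i.val) :
    j ∈ Finset.univ.filter (fun j : Fin n => (R.1 j : ℕ) / 2 = i.val) :=
  Finset.mem_filter.mpr ⟨Finset.mem_univ j, h⟩

lemma two_in_block {R : RookPlacement n} {i : Fin n} (h : 2 ≤ blockRooks R i) :
    ∃ j1 j2 : Fin n, j1 ≠ j2 ∧ ((R.1 j1 : ℕ)) / 2 = i.val ∧ ((R.1 j2 : ℕ)) / 2 = i.val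
      ∧ (R.1 j1 : ℕ) ≠ (R.1 j2 : ℕ) := by
  unfold blockRooks at h
  have h' : 1 < (Finset.univ.filter (fun j : Fin n => (R.1 j : ℕ) / 2 = i.val)).card := h
  obtain ⟨j1, hj1, j2, hj2, hne⟩ := Finset.one_lt_card.mp h'
  simp only [Finset.mem_filter, Finset.mem_univ, true_and] at hj1 hj2
  exact ⟨j1, j2, hne, hj1, hj2, fun hc => hne (R.2.1 (Fin.ext hc))⟩

lemma one_le_blockRooks (R : RookPlacement n) (j : Fin n) :
    1 ≤ blockRooks R ⟨(R.1 j : ℕ) / 2, block_lt R j⟩ := by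
  unfold blockRooks
  rw [Nat.one_le_iff_ne_zero, ← Nat.pos_iff_ne_zero, Finset.card_pos]
  exact ⟨j, mem_block rfl⟩

lemma two_le_of_two {R : RookPlacement n} {j j' : Fin n} (hne : j ≠ j')
    (h' : ((R.1 j' : ℕ)) / 2 = (R.1 j : ℕ) / 2) :
    2 ≤ blockRooks R ⟨(R.1 j : ℕ) / 2, block_lt R j⟩ := by
  unfold blockRooks
  exact Finset.one_lt_card.mpr ⟨j, mem_block rfl, j', mem_block h', hne⟩

lemma left_to_right {R : RookPlacement n} (hL : LeftAligned R) :
    RightAligned (Fmap R) := by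
  intro i ⟨j, hj⟩
  have hjd : ((Fmap R).1 j : ℕ) / 2 = i.val := by rw [hj]; omega
  have hRd : ((R.1 j : ℕ)) / 2 = i.val := by rw [← Fmap_div R j]; exact hjd
  by_cases h : blockRooks R ⟨(R.1 j : ℕ) / 2, block_lt R j⟩ = 1
  · have hv : ((Fmap R).1 j : ℕ) = flipc (R.1 j) := by rw [Fmap_val, if_pos h]
    have hRj : (R.1 j : ℕ) = 2 * i.val + 1 := by
      have := hv.symm.trans hj
      unfold flipc at this; split at this <;> omega
    obtain ⟨j', hj'⟩ := hL i ⟨j, hRj⟩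
    exfalso
    have hne : j ≠ j' := fun hc => by rw [hc] at hRj; omega
    have h2 := two_le_of_two hne (show ((R.1 j' : ℕ)) / 2 = (R.1 j : ℕ) / 2 by omega)
    omega
  · have hv : ((Fmap R).1 j : ℕ) = (R.1 j : ℕ) := by rw [Fmap_val, if_neg h]
    have hRj : (R.1 j : ℕ) = 2 * i.val := hv.symm.trans hj
    have h1 := one_le_blockRooks R j
    have h2 : 2 ≤ blockRooks R ⟨(R.1 j : ℕ) / 2, block_lt R j⟩ := by omega
    obtain ⟨j1, j2, hne, hd1, hd2, hvne⟩ := two_in_block (by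
      have heq : (⟨(R.1 j : ℕ) / 2, block_lt R j⟩ : Fin n) = i := Fin.ext hRd
      rwa [heq] at h2)
    have hv1 := (R.1 j1).2
    have hv2 := (R.1 j2).2
    obtain ⟨j', hj'⟩ : ∃ j' : Fin n, (R.1 j' : ℕ) = 2 * i.val + 1 := by
      rcases (show (R.1 j1 : ℕ) = 2 * i.val + 1 ∨ (R.1 j2 : ℕ) = 2 * i.val + 1 by omega)
        with h' | h'
      exacts [⟨j1, h'⟩, ⟨j2, h'⟩]
    refine ⟨j', ?_⟩
    have hbj' : (⟨(R.1 j' : ℕ) / 2, block_lt R j'⟩ : Fin n) = ⟨(R.1 j : ℕ) / 2, block_lt R j⟩ := by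
      simp only [Fin.mk.injEq]; omega
    have : ((Fmap R).1 j' : ℕ) = (R.1 j' : ℕ) := by rw [Fmap_val, hbj', if_neg h]
    omega

lemma right_to_left {R : RookPlacement n} (hR : RightAligned R) :
    LeftAligned (Fmap R) := by
  intro i ⟨j, hj⟩
  have hjd : ((Fmap R).1 j : ℕ) / 2 = i.val := by rw [hj]; omega
  have hRd : ((R.1 j : ℕ)) / 2 = i.val := by rw [← Fmap_div R j]; exact hjd
  by_cases h : blockRooks R ⟨(R.1 j : ℕ) / 2, block_lt R j⟩ = 1
  · have hv : ((Fmap R).1 j : ℕ) = flipc (R.1 j) := by rw [Fmap_val, if_pos h]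
    have hRj : (R.1 j : ℕ) = 2 * i.val := by
      have := hv.symm.trans hj
      unfold flipc at this; split at this <;> omega
    obtain ⟨j', hj'⟩ := hR i ⟨j, hRj⟩
    exfalso
    have hne : j ≠ j' := fun hc => by rw [hc] at hRj; omega
    have h2 := two_le_of_two hne (show ((R.1 j' : ℕ)) / 2 = (R.1 j : ℕ) / 2 by omega)
    omega
  · have hv : ((Fmap R).1 j : ℕ) = (R.1 j : ℕ) := by rw [Fmap_val, if_neg h]
    have hRj : (R.1 j : ℕ) = 2 * i.val + 1 := hv.symm.trans hj
    have h1 := one_le_blockRooks R j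
    have h2 : 2 ≤ blockRooks R ⟨(R.1 j : ℕ) / 2, block_lt R j⟩ := by omega
    obtain ⟨j1, j2, hne, hd1, hd2, hvne⟩ := two_in_block (by
      have heq : (⟨(R.1 j : ℕ) / 2, block_lt R j⟩ : Fin n) = i := Fin.ext hRd
      rwa [heq] at h2)
    have hv1 := (R.1 j1).2
    have hv2 := (R.1 j2).2
    obtain ⟨j', hj'⟩ : ∃ j' : Fin n, (R.1 j' : ℕ) = 2 * i.val := by
      rcases (show (R.1 j1 : ℕ) = 2 * i.val ∨ (R.1 j2 : ℕ) = 2 * i.val by omega)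
        with h' | h'
      exacts [⟨j1, h'⟩, ⟨j2, h'⟩]
    refine ⟨j', ?_⟩
    have hbj' : (⟨(R.1 j' : ℕ) / 2, block_lt R j'⟩ : Fin n) = ⟨(R.1 j : ℕ) / 2, block_lt R j⟩ := by
      simp only [Fin.mk.injEq]; omega
    have : ((Fmap R).1 j' : ℕ) = (R.1 j' : ℕ) := by rw [Fmap_val, hbj', if_neg h]
    omega

end RookFlip

/-- The number of left-aligned rook placements on `2δ_n` with exactly `k`
blocks containing one rook equals the number of right-aligned rook placements
on `2δ_n` with exactly `k` blocks containing one rook. -/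
theorem left_aligned_card_eq_right_aligned_card (n k : ℕ) :
    Nat.card {R : RookPlacement n // LeftAligned R ∧ bor R = k} =
      Nat.card {R : RookPlacement n // RightAligned R ∧ bor R = k} := by
  apply Nat.card_congr
  exact {
    toFun := fun ⟨R, hL, hb⟩ => ⟨RookFlip.Fmap R, RookFlip.left_to_right hL,
      by rw [RookFlip.bor_Fmap]; exact hb⟩
    invFun := fun ⟨R, hR, hb⟩ => ⟨RookFlip.Fmap R, RookFlip.right_to_left hR,
      by rw [RookFlip.bor_Fmap]; exact hb⟩
    left_inv := fun ⟨R, _, _⟩ => Subtype.ext (RookFlip.Fmap_Fmap R)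
    right_inv := fun ⟨R, _, _⟩ => Subtype.ext (RookFlip.Fmap_Fmap R) }
end

section
/- Σ_{S} 2^{bso(S)} = (n+1)!, where the sum is over rook placements S in Λ_n-type Young diagrams that arise as images of the column-deletion projection Π_n from rook placements on 2δ_n (equivalently, over full rook placements on Young diagrams fitting in an n×n box with one rook per row and column, all of whose blocks have size at most 2), and bso(S) is the number of blocks of size 1 in S. -/
/-- A full rook placement on a Young diagram with `n` rows fitting in an
`n × n` box (drawn in French notation).  `p.1 i` is the length of row `i`
(rows numbered from the top, so `p.1` is monotone) and `p.2 i` is the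
(0-indexed) column of the rook of row `i`; there is exactly one rook in each
row and in each column (`p.2` is a bijection). -/
abbrev FullPlacement (n : ℕ) :=
  {p : (Fin n → Fin (n + 1)) × (Fin n → Fin n) //
    (∀ i j : Fin n, i ≤ j → p.1 i ≤ p.1 j) ∧ Function.Bijective p.2 ∧
      ∀ i : Fin n, (p.2 i : ℕ) < (p.1 i : ℕ)}

/-- The height of column `c` of the Young diagram underlying `S`. -/
def colHeight {n : ℕ} (S : FullPlacement n) (c : Fin n) : ℕ :=
  (Finset.univ.filter (fun i : Fin n => (c : ℕ) < (S.1.1 i : ℕ))).card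

/-- The size of the block (maximal set of columns of equal height) containing
column `c`. -/
def blockSize {n : ℕ} (S : FullPlacement n) (c : Fin n) : ℕ :=
  (Finset.univ.filter (fun c' : Fin n => colHeight S c' = colHeight S c)).card

/-- `bso S` is the number of blocks of size `1` of `S`. -/
def bso {n : ℕ} (S : FullPlacement n) : ℕ :=
  (Finset.univ.filter (fun c : Fin n => blockSize S c = 1)).card

attribute [local instance] Classical.propDecidable



lemma cardlt (n d : ℕ) (hd : d ≤ n) :
    (Finset.univ.filter (fun i : Fin n => (i : ℕ) < d)).card = d := by
  have h : (Finset.univ.filter (fun i : Fin n => (i : ℕ) < d)).card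
      = (Finset.range d).card :=
    Finset.card_nbij (fun i => (i : ℕ))
      (by intro a ha; simp at ha ⊢; omega)
      (by intro a _ b _ h; exact Fin.ext h)
      (by intro b hb; simp at hb ⊢; exact ⟨⟨b, by omega⟩, by simpa, rfl⟩)
  simpa using h

lemma cardge (n d : ℕ) :
    (Finset.univ.filter (fun i : Fin n => d ≤ (i : ℕ))).card = n - d := by
  rcases le_or_gt d n with hd | hd
  · have h1 := cardlt n d hd
    have h2 : (Finset.univ.filter (fun i : Fin n => d ≤ (i : ℕ)))
        ∪ (Finset.univ.filter (fun i : Fin n => (i : ℕ) < d)) = Finset.univ := by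
      ext i; simp; omega
    have h3 := Finset.card_union_of_disjoint (s := Finset.univ.filter (fun i : Fin n => d ≤ (i : ℕ)))
      (t := Finset.univ.filter (fun i : Fin n => (i : ℕ) < d))
      (by rw [Finset.disjoint_filter]; intro i _ h1; omega)
    rw [h2, Finset.card_fin] at h3
    omega
  · rw [Finset.filter_false_of_mem, Finset.card_empty]
    · omega
    · intro i _; simp; omega

noncomputable instance (n : ℕ) : Fintype (RookPlacement n) := by
  unfold RookPlacement; infer_instance

noncomputable def rookStep (n : ℕ) :
    RookPlacement (n + 1) ≃
      Σ R : RookPlacement n, {c : Fin (2 * (n + 1)) // ∀ j : Fin n, (R.1 j : ℕ) ≠ (c : ℕ)} where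
  toFun R' :=
    ⟨⟨fun j => ⟨(R'.1 j.castSucc : ℕ), by
        have := R'.2.2 j.castSucc; simp at this ⊢; omega⟩,
      by
        constructor
        · intro a b h
          have h2 : R'.1 a.castSucc = R'.1 b.castSucc := by
            apply Fin.ext; simpa [Fin.mk.injEq] using h
          have := R'.2.1 h2
          exact Fin.castSucc_injective n this
        · intro i
          have := R'.2.2 i.castSucc; simpa using this⟩,
      ⟨R'.1 (Fin.last n), by
        intro j h
        simp only at h
        have h2 : R'.1 j.castSucc = R'.1 (Fin.last n) := Fin.ext h
        have := R'.2.1 h2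
        exact absurd this (Fin.ne_of_lt (Fin.castSucc_lt_last j))⟩⟩
  invFun P :=
    ⟨fun i =>
      if h : (i : ℕ) < n then
        ⟨(P.1.1 ⟨i, h⟩ : ℕ), by have := (P.1.1 ⟨i, h⟩).2; omega⟩
      else P.2.1,
      by
        constructor
        · intro a b hab
          by_cases ha : (a : ℕ) < n <;> by_cases hb : (b : ℕ) < n <;>
            simp only [ha, hb, dite_true, dite_false, dif_pos, dif_neg, not_false_iff] at hab
          · have : P.1.1 ⟨a, ha⟩ = P.1.1 ⟨b, hb⟩ := Fin.ext (by simpa [Fin.mk.injEq] using hab)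
            have := P.1.2.1 this
            simp [Fin.mk.injEq] at this
            exact Fin.ext this
          · exact absurd (by simpa using congrArg Fin.val hab) (P.2.2 ⟨a, ha⟩)
          · exact absurd (by simpa using (congrArg Fin.val hab).symm) (P.2.2 ⟨b, hb⟩)
          · have h1 := a.2; have h2 := b.2
            apply Fin.ext; omega
        · intro i
          dsimp only
          by_cases h : (i : ℕ) < n
          · rw [dif_pos h]
            have := P.1.2.2 ⟨i, h⟩; simpa using this
          · rw [dif_neg h]
            have h1 := i.2; have h2 := P.2.1.2; omega⟩
  left_inv R' := by
    apply Subtype.ext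
    funext i
    dsimp only
    by_cases h : (i : ℕ) < n
    · rw [dif_pos h]
      apply Fin.ext; simp
    · rw [dif_neg h]
      have hi : i = Fin.last n := Fin.ext (by have := i.2; simp [Fin.last]; omega)
      rw [hi]
  right_inv P := by
    rcases P with ⟨R, c, hc⟩
    refine Sigma.ext ?_ ?_
    ·
      apply Subtype.ext
      funext j
      apply Fin.ext
      have hj : ((j.castSucc : Fin (n+1)) : ℕ) < n := by simp
      simp [dif_pos hj]
    ·
      refine (Subtype.heq_iff_coe_eq ?_).2 ?_
      · intro x
        constructor
        · intro h j
          have := h j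
          have hj : ((j.castSucc : Fin (n+1)) : ℕ) < n := by simp
          simpa [dif_pos hj] using this
        · intro h j
          have := h j
          have hj : ((j.castSucc : Fin (n+1)) : ℕ) < n := by simp
          simpa [dif_pos hj] using this
      · have hn : ¬ ((Fin.last n : Fin (n+1)) : ℕ) < n := by simp
        simp [dif_neg hn]

example : True := trivial

lemma card_rook (n : ℕ) : Fintype.card (RookPlacement n) = Nat.factorial (n + 1) := by
  induction n with
  | zero =>
    have : Fintype.card (RookPlacement 0) = 1 := by
      rw [Fintype.card_eq_one_iff]
      refine ⟨⟨fun i => i.elim0, fun a => a.elim0, fun i => i.elim0⟩, ?_⟩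
      intro y
      apply Subtype.ext; funext i; exact i.elim0
    simpa using this
  | succ n ih =>
    rw [Fintype.card_congr (rookStep n), Fintype.card_sigma]
    have hfib : ∀ R : RookPlacement n,
        Fintype.card {c : Fin (2 * (n + 1)) // ∀ j : Fin n, (R.1 j : ℕ) ≠ (c : ℕ)} = n + 2 := by
      intro R
      rw [Fintype.card_subtype]
      have himg : (Finset.univ.filter (fun c : Fin (2 * (n + 1)) => ∀ j : Fin n, (R.1 j : ℕ) ≠ (c : ℕ)))
          = (Finset.univ.image (fun j : Fin n => (Fin.castLE (by omega) (R.1 j) : Fin (2 * (n + 1)))))ᶜ := by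
        ext c
        simp only [Finset.mem_filter, Finset.mem_univ, true_and, Finset.mem_compl,
          Finset.mem_image, not_exists]
        constructor
        · intro h j hj
          exact h j (by simpa [Fin.ext_iff] using hj)
        · intro h j hj
          exact h j (by simpa [Fin.ext_iff] using hj)
      rw [himg, Finset.card_compl, Finset.card_image_of_injective _
        (fun a b hab => R.2.1 (Fin.ext (by simpa [Fin.ext_iff] using hab)))]
      simp; omega
    rw [Finset.sum_congr rfl (fun R _ => hfib R), Finset.sum_const, Finset.card_univ, ih,
      smul_eq_mul]
    rw [Nat.factorial_succ (n + 1)]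
    ring


lemma card_univ_filter_eq {α : Type*} [Fintype α] (p q : α → Prop)
    (hp : DecidablePred p) (hq : DecidablePred q) (h : ∀ x, p x ↔ q x) :
    (@Finset.filter α p hp Finset.univ).card = (@Finset.filter α q hq Finset.univ).card := by
  congr 1
  ext a
  rw [Finset.mem_filter, Finset.mem_filter, h a]

section PartB

variable {n : ℕ}

/-- number of rooks strictly left of rook `j`'s column. -/
def rankR (R : RookPlacement n) (j : Fin n) : ℕ :=
  (Finset.univ.filter (fun k : Fin n => (R.1 k : ℕ) < (R.1 j : ℕ))).card

/-- number of rooks within the first `2*(i+1)` columns. -/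
def lenR (R : RookPlacement n) (i : Fin n) : ℕ :=
  (Finset.univ.filter (fun k : Fin n => (R.1 k : ℕ) < 2 * (i.val + 1))).card

lemma lenR_le (R : RookPlacement n) (i : Fin n) : lenR R i ≤ n := by
  have := Finset.card_filter_le (Finset.univ : Finset (Fin n))
    (fun k : Fin n => (R.1 k : ℕ) < 2 * (i.val + 1))
  simpa [lenR] using this

lemma rankR_lt (R : RookPlacement n) (j : Fin n) : rankR R j < n := by
  have h : (Finset.univ.filter (fun k : Fin n => (R.1 k : ℕ) < (R.1 j : ℕ))) ≠ Finset.univ := by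
    intro h
    have : j ∈ Finset.univ.filter (fun k : Fin n => (R.1 k : ℕ) < (R.1 j : ℕ)) := by
      rw [h]; exact Finset.mem_univ j
    simp at this
  have := Finset.card_lt_card (Finset.ssubset_univ_iff.2 h)
  simpa [rankR] using this

lemma rank_lt_rank (R : RookPlacement n) {a b : Fin n} (h : (R.1 a : ℕ) < (R.1 b : ℕ)) :
    rankR R a < rankR R b := by
  apply Finset.card_lt_card
  refine (Finset.ssubset_iff_of_subset ?_).2
    ⟨a, by simp only [Finset.mem_filter, Finset.mem_univ, true_and]; exact h, by simp⟩
  apply Finset.monotone_filter_right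
  intro k hk; omega

lemma rank_lt_len_iff (R : RookPlacement n) (j i : Fin n) :
    rankR R j < lenR R i ↔ (R.1 j : ℕ) < 2 * (i.val + 1) := by
  constructor
  · intro h
    by_contra hc
    have hsub : (Finset.univ.filter (fun k : Fin n => (R.1 k : ℕ) < 2 * (i.val + 1)))
        ⊆ (Finset.univ.filter (fun k : Fin n => (R.1 k : ℕ) < (R.1 j : ℕ))) := by
      apply Finset.monotone_filter_right; intro k hk; omega
    have := Finset.card_le_card hsub
    unfold rankR lenR at *; omega
  · intro h
    apply Finset.card_lt_card
    refine (Finset.ssubset_iff_of_subset ?_).2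
      ⟨j, by simp only [Finset.mem_filter, Finset.mem_univ, true_and]; exact h, by simp⟩
    apply Finset.monotone_filter_right
    intro k hk; omega

/-- The projection `Π_n`. -/
def PiProj (R : RookPlacement n) : FullPlacement n :=
  ⟨(fun i => ⟨lenR R i, Nat.lt_succ_of_le (lenR_le R i)⟩,
    fun j => ⟨rankR R j, rankR_lt R j⟩), by
    refine ⟨?_, ?_, ?_⟩
    · intro i j hij
      have : i.val ≤ j.val := hij
      simp only [Fin.mk_le_mk]
      apply Finset.card_le_card
      apply Finset.monotone_filter_right
      intro k hk; omega
    · rw [← Finite.injective_iff_bijective]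
      intro a b hab
      simp only [Fin.mk.injEq] at hab
      by_contra hne
      have hr : R.1 a ≠ R.1 b := fun h => hne (R.2.1 h)
      rcases Nat.lt_or_ge (R.1 a : ℕ) (R.1 b : ℕ) with h | h
      · have := rank_lt_rank R h; omega
      · rcases Nat.lt_or_ge (R.1 b : ℕ) (R.1 a : ℕ) with h' | h'
        · have := rank_lt_rank R h'; omega
        · exact hr (Fin.ext (by omega))
    · intro j
      exact (rank_lt_len_iff R j j).2 (R.2.2 j)⟩

lemma card_comp_bij' {f : Fin n → Fin n} (hf : Function.Bijective f)
    (p q : Fin n → Prop) (hp : DecidablePred p) (hq : DecidablePred q)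
    (h : ∀ k, p k ↔ q (f k)) :
    (@Finset.filter _ p hp Finset.univ).card = (@Finset.filter _ q hq Finset.univ).card := by
  apply Finset.card_nbij f
  · intro a ha
    rw [Finset.mem_coe, Finset.mem_filter] at ha ⊢
    exact ⟨Finset.mem_univ _, (h a).1 ha.2⟩
  · intro a _ b _ hab; exact hf.1 hab
  · intro b hb
    simp only [Finset.coe_filter, Set.mem_setOf_eq, Set.mem_image] at hb ⊢
    obtain ⟨a, ha⟩ := hf.2 b
    exact ⟨a, ⟨Finset.mem_univ a, (h a).2 (by rw [ha]; exact hb.2)⟩, ha⟩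

lemma cardlt' (n d : ℕ) (hd : d ≤ n) (P : Fin n → Prop) (inst : DecidablePred P)
    (hP : ∀ i : Fin n, P i ↔ (i : ℕ) < d) :
    (@Finset.filter _ P inst Finset.univ).card = d := by
  have h : @Finset.filter _ P inst Finset.univ
      = Finset.univ.filter (fun i : Fin n => (i : ℕ) < d) := by
    ext a
    rw [Finset.mem_filter, Finset.mem_filter, hP a]
  rw [h, cardlt n d hd]

lemma card_comp_bij {f : Fin n → Fin n} (hf : Function.Bijective f) (p : Fin n → Prop) :
    (Finset.univ.filter (fun k => p (f k))).card = (Finset.univ.filter p).card := by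
  apply Finset.card_nbij f
  · intro a ha
    simp only [Finset.mem_coe, Finset.mem_filter, Finset.mem_univ, true_and] at ha ⊢
    exact ha
  · intro a _ b _ h; exact hf.1 h
  · intro b hb
    simp only [Finset.coe_filter, Set.mem_setOf_eq, Set.mem_image] at hb ⊢
    obtain ⟨a, ha⟩ := hf.2 b
    exact ⟨a, ⟨Finset.mem_univ a, by rw [ha]; exact hb.2⟩, ha⟩

lemma colHeight_PiProj (R : RookPlacement n) (j : Fin n) :
    colHeight (PiProj R) ((PiProj R).1.2 j) = n - (R.1 j : ℕ) / 2 := by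
  unfold colHeight
  have h : Finset.univ.filter
        (fun i : Fin n => (((PiProj R).1.2 j : ℕ)) < ((PiProj R).1.1 i : ℕ))
      = Finset.univ.filter (fun i : Fin n => (R.1 j : ℕ) / 2 ≤ i.val) := by
    apply Finset.filter_congr
    intro i _
    show rankR R j < lenR R i ↔ _
    rw [rank_lt_len_iff]
    omega
  rw [h, cardge]

lemma block_lt (R : RookPlacement n) (j : Fin n) : (R.1 j : ℕ) / 2 < n := by
  have := (R.1 j).2; omega

lemma blockSize_PiProj (R : RookPlacement n) (j : Fin n) :
    blockSize (PiProj R) ((PiProj R).1.2 j) = blockRooks R ⟨(R.1 j : ℕ) / 2, block_lt R j⟩ := by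
  unfold blockSize blockRooks
  refine Eq.symm (card_comp_bij' (PiProj R).2.2.1 _ _ _ _ ?_)
  intro k
  show (R.1 k : ℕ) / 2 = (R.1 j : ℕ) / 2 ↔
    colHeight (PiProj R) ((PiProj R).1.2 k) = colHeight (PiProj R) ((PiProj R).1.2 j)
  rw [colHeight_PiProj R k, colHeight_PiProj R j]
  have h1 := block_lt R k; have h2 := block_lt R j
  omega
lemma blockRooks_le_two (R : RookPlacement n) (i : Fin n) : blockRooks R i ≤ 2 := by
  unfold blockRooks
  have h : ((({2 * i.val, 2 * i.val + 1} : Finset ℕ)).card) = 2 := by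
    rw [Finset.card_insert_of_notMem (by simp), Finset.card_singleton]
  refine le_trans ?_ (le_of_eq h)
  apply Finset.card_le_card_of_injOn (fun k => (R.1 k : ℕ))
  · intro k hk
    simp only [Finset.mem_coe, Finset.mem_filter, Finset.mem_univ, true_and] at hk
    simp only [Finset.mem_coe, Finset.mem_insert, Finset.mem_singleton]
    omega
  · intro a _ b _ h
    exact R.2.1 (Fin.ext h)

lemma blockRooks_pos (R : RookPlacement n) (j : Fin n) :
    1 ≤ blockRooks R ⟨(R.1 j : ℕ) / 2, block_lt R j⟩ := by
  apply Finset.card_pos.2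
  exact ⟨j, by simp⟩

lemma PiProj_good (R : RookPlacement n) : ∀ c : Fin n, blockSize (PiProj R) c ≤ 2 := by
  intro c
  obtain ⟨j, hj⟩ := (PiProj R).2.2.1.2 c
  rw [← hj, blockSize_PiProj]
  exact blockRooks_le_two R _

/- ### Lemmas about full placements -/

lemma colHeight_le (S : FullPlacement n) (c : Fin n) : colHeight S c ≤ n := by
  have := Finset.card_filter_le (Finset.univ : Finset (Fin n))
    (fun i : Fin n => (c : ℕ) < (S.1.1 i : ℕ))
  simpa [colHeight] using this

lemma colHeight_pos (S : FullPlacement n) (c : Fin n) : 1 ≤ colHeight S c := by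
  obtain ⟨i, hi⟩ := S.2.2.1.2 c
  have h := S.2.2.2 i
  rw [hi] at h
  exact Finset.card_pos.2 ⟨i, by simp [h]⟩

lemma colHeight_anti (S : FullPlacement n) {c c' : Fin n} (h : c.val ≤ c'.val) :
    colHeight S c' ≤ colHeight S c := by
  apply Finset.card_le_card
  apply Finset.monotone_filter_right
  intro i hi; omega

lemma m_le_iff (S : FullPlacement n) (c : Fin n) (i : Fin n) :
    n - colHeight S c ≤ i.val ↔ (c : ℕ) < (S.1.1 i : ℕ) := by
  have hpart : colHeight S c
      + (Finset.univ.filter (fun i' : Fin n => (S.1.1 i' : ℕ) ≤ (c : ℕ))).card = n := by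
    have h2 : (Finset.univ.filter (fun i' : Fin n => (S.1.1 i' : ℕ) ≤ (c : ℕ)))
        = (Finset.univ.filter (fun i' : Fin n => ¬ ((c : ℕ) < (S.1.1 i' : ℕ)))) := by
      apply Finset.filter_congr; intro x _; omega
    rw [h2]
    have := Finset.card_filter_add_card_filter_not
      (s := (Finset.univ : Finset (Fin n))) (p := fun i' : Fin n => (c : ℕ) < (S.1.1 i' : ℕ))
    simpa [colHeight] using this
  have hle := colHeight_le S c
  constructor
  · intro h
    by_contra hc
    have hsub : (Finset.univ.filter (fun i' : Fin n => i'.val < i.val + 1))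
        ⊆ (Finset.univ.filter (fun i' : Fin n => (S.1.1 i' : ℕ) ≤ (c : ℕ))) := by
      intro x hx
      simp only [Finset.mem_filter, Finset.mem_univ, true_and] at hx ⊢
      have hxle : x ≤ i := by rw [Fin.le_def]; omega
      have := S.2.1 x i hxle
      rw [Fin.le_def] at this
      omega
    have hcard := Finset.card_le_card hsub
    rw [cardlt n (i.val + 1) i.2] at hcard
    omega
  · intro h
    have hsub : (Finset.univ.filter (fun i' : Fin n => (S.1.1 i' : ℕ) ≤ (c : ℕ)))
        ⊆ (Finset.univ.filter (fun i' : Fin n => i'.val < i.val)) := by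
      intro x hx
      simp only [Finset.mem_filter, Finset.mem_univ, true_and] at hx ⊢
      by_contra hc
      have hxge : i ≤ x := by rw [Fin.le_def]; omega
      have := S.2.1 i x hxge
      rw [Fin.le_def] at this
      omega
    have hcard := Finset.card_le_card hsub
    rw [cardlt n i.val (le_of_lt i.2)] at hcard
    omega

lemma blockSize_pos (S : FullPlacement n) (c : Fin n) : 1 ≤ blockSize S c :=
  Finset.card_pos.2 ⟨c, by simp [blockSize]⟩

lemma blockSize_eq_of_height_eq (S : FullPlacement n) {c c' : Fin n}
    (h : colHeight S c' = colHeight S c) : blockSize S c' = blockSize S c := by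
  unfold blockSize
  congr 1
  apply Finset.filter_congr
  intro x _
  rw [h]

lemma no_three (S : FullPlacement n) (hS : ∀ c : Fin n, blockSize S c ≤ 2)
    {a b d : Fin n} (hab : a ≠ b) (had : a ≠ d) (hbd : b ≠ d)
    (h1 : colHeight S a = colHeight S d) (h2 : colHeight S b = colHeight S d) : False := by
  have hsub : ({a, b, d} : Finset (Fin n))
      ⊆ Finset.univ.filter (fun c' => colHeight S c' = colHeight S d) := by
    intro x hx
    simp only [Finset.mem_insert, Finset.mem_singleton] at hx
    rcases hx with rfl | rfl | rfl <;> simp [h1, h2]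
  have h3 : ({a, b, d} : Finset (Fin n)).card = 3 := by
    rw [Finset.card_insert_of_notMem (by simp [hab, had]),
      Finset.card_insert_of_notMem (by simp [hbd]), Finset.card_singleton]
  have h4 := Finset.card_le_card hsub
  have h5 := hS d
  unfold blockSize at h5
  omega

lemma adj_of_height_eq (S : FullPlacement n) (hS : ∀ c : Fin n, blockSize S c ≤ 2)
    {c c' : Fin n} (hlt : c.val < c'.val) (h : colHeight S c' = colHeight S c) :
    c'.val = c.val + 1 := by
  by_contra hne
  have hmidlt : c.val + 1 < n := by have := c'.2; omega
  set m : Fin n := ⟨c.val + 1, hmidlt⟩ with hm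
  have hmid : colHeight S m = colHeight S c := by
    apply le_antisymm
    · exact colHeight_anti S (by simp [hm])
    · rw [← h]; exact colHeight_anti S (by simp [hm]; omega)
  exact no_three S hS (a := c) (b := m) (d := c')
    (by simp [hm, Fin.ext_iff]) (by simp [Fin.ext_iff]; omega) (by simp [hm, Fin.ext_iff]; omega)
    h.symm (by rw [hmid, h])

/- ### The inverse map -/

/-- Offset (0 or 1) of the 2δ-column corresponding to column `c`. -/
noncomputable def offs (S : FullPlacement n) (f : {c : Fin n // blockSize S c = 1} → Bool)
    (c : Fin n) : ℕ :=
  if h : blockSize S c = 1 then (f ⟨c, h⟩).toNat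
  else if 0 < c.val ∧ colHeight S ⟨c.val - 1, (Nat.sub_le c.val 1).trans_lt c.2⟩ = colHeight S c
    then 1 else 0

noncomputable def colMap (S : FullPlacement n) (f : {c : Fin n // blockSize S c = 1} → Bool)
    (c : Fin n) : ℕ :=
  2 * (n - colHeight S c) + offs S f c

lemma offs_le (S : FullPlacement n) (f : {c : Fin n // blockSize S c = 1} → Bool) (c : Fin n) :
    offs S f c ≤ 1 := by
  unfold offs
  split
  · exact Bool.toNat_le _
  · split <;> omega

lemma colMap_strictmono (S : FullPlacement n) (hS : ∀ c : Fin n, blockSize S c ≤ 2)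
    (f : {c : Fin n // blockSize S c = 1} → Bool) {c c' : Fin n} (hlt : c.val < c'.val) :
    colMap S f c < colMap S f c' := by
  have hanti := colHeight_anti S (le_of_lt hlt)
  have h1 := colHeight_pos S c; have h2 := colHeight_le S c
  have h3 := colHeight_pos S c'; have h4 := colHeight_le S c'
  have ho1 := offs_le S f c; have ho2 := offs_le S f c'
  rcases lt_or_eq_of_le hanti with hlt' | heq
  · unfold colMap; omega
  · -- equal heights: adjacent block of size 2
    have hadj := adj_of_height_eq S hS hlt heq
    have hbs : blockSize S c = 2 := by
      refine le_antisymm (hS c) ?_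
      have hsub : ({c, c'} : Finset (Fin n))
          ⊆ Finset.univ.filter (fun x => colHeight S x = colHeight S c) := by
        intro x hx
        simp only [Finset.mem_insert, Finset.mem_singleton] at hx
        rcases hx with rfl | rfl <;> simp [heq]
      have h5 := Finset.card_le_card hsub
      have h6 : ({c, c'} : Finset (Fin n)).card = 2 := by
        rw [Finset.card_insert_of_notMem (by simp [Fin.ext_iff]; omega),
          Finset.card_singleton]
      unfold blockSize
      omega
    have hbs' : blockSize S c' = 2 := (blockSize_eq_of_height_eq S heq).trans hbs
    unfold colMap offs
    rw [dif_neg (by omega), dif_neg (by omega)]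
    rw [if_neg, if_pos]
    · rw [heq]; omega
    · constructor
      · omega
      · have : (⟨c'.val - 1, (Nat.sub_le c'.val 1).trans_lt c'.2⟩ : Fin n) = c := by
          simp [Fin.ext_iff]; omega
        rw [this]; exact heq.symm
    · rintro ⟨h0, hh⟩
      exact no_three S hS (a := ⟨c.val - 1, (Nat.sub_le c.val 1).trans_lt c.2⟩) (b := c') (d := c)
        (by simp [Fin.ext_iff]; omega) (by simp [Fin.ext_iff]; omega) (by simp [Fin.ext_iff]; omega)
        hh heq

lemma colMap_lt_iff (S : FullPlacement n) (hS : ∀ c : Fin n, blockSize S c ≤ 2)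
    (f : {c : Fin n // blockSize S c = 1} → Bool) {c c' : Fin n} :
    colMap S f c < colMap S f c' ↔ c.val < c'.val := by
  constructor
  · intro h
    by_contra hc
    rcases Nat.lt_or_ge c'.val c.val with h' | h'
    · have := colMap_strictmono S hS f h'; omega
    · have : c = c' := Fin.ext (by omega)
      rw [this] at h; omega
  · exact colMap_strictmono S hS f

lemma colMap_lt (S : FullPlacement n) (f : {c : Fin n // blockSize S c = 1} → Bool) (c : Fin n) :
    colMap S f c < 2 * n := by
  have h1 := colHeight_pos S c; have h2 := colHeight_le S c
  have := offs_le S f c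
  unfold colMap; omega

/-- The inverse of `Π_n` given the left/right bits `f` of size-one blocks. -/
noncomputable def Ginv (S : FullPlacement n) (hS : ∀ c : Fin n, blockSize S c ≤ 2)
    (f : {c : Fin n // blockSize S c = 1} → Bool) : RookPlacement n :=
  ⟨fun j => ⟨colMap S f (S.1.2 j), colMap_lt S f _⟩, by
    constructor
    · intro a b hab
      simp only [Fin.mk.injEq] at hab
      have : S.1.2 a = S.1.2 b := by
        by_contra hne
        have : (S.1.2 a).val ≠ (S.1.2 b).val := fun h => hne (Fin.ext h)
        rcases Nat.lt_or_ge (S.1.2 a).val (S.1.2 b).val with h | h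
        · have := colMap_strictmono S hS f h; omega
        · have := colMap_strictmono S hS f (show (S.1.2 b).val < (S.1.2 a).val by omega); omega
      exact S.2.2.1.1 this
    · intro j
      have hb := (m_le_iff S (S.1.2 j) j).2 (S.2.2.2 j)
      have := offs_le S f (S.1.2 j)
      show colMap S f (S.1.2 j) < 2 * (j.val + 1)
      unfold colMap; omega⟩

lemma rank_Ginv (S : FullPlacement n) (hS : ∀ c : Fin n, blockSize S c ≤ 2)
    (f : {c : Fin n // blockSize S c = 1} → Bool) (j : Fin n) :
    rankR (Ginv S hS f) j = (S.1.2 j : ℕ) := by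
  unfold rankR
  refine Eq.trans (card_comp_bij' S.2.2.1 _ (fun c : Fin n => c.val < (S.1.2 j).val) _
    (fun c => Classical.propDecidable _) ?_)
    (cardlt' n _ (le_of_lt (S.1.2 j).2) _ _ (fun i => Iff.rfl))
  intro k
  show colMap S f (S.1.2 k) < colMap S f (S.1.2 j) ↔ _
  exact colMap_lt_iff S hS f
lemma len_Ginv (S : FullPlacement n) (hS : ∀ c : Fin n, blockSize S c ≤ 2)
    (f : {c : Fin n // blockSize S c = 1} → Bool) (i : Fin n) :
    lenR (Ginv S hS f) i = (S.1.1 i : ℕ) := by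
  unfold lenR
  refine Eq.trans (card_comp_bij' S.2.2.1 _ (fun c : Fin n => c.val < (S.1.1 i : ℕ)) _
    (fun c => Classical.propDecidable _) ?_)
    (cardlt' n _ (by have := (S.1.1 i).2; omega) _ _ (fun c => Iff.rfl))
  intro k
  show colMap S f (S.1.2 k) < 2 * (i.val + 1) ↔ _
  have ho := offs_le S f (S.1.2 k)
  have hm := m_le_iff S (S.1.2 k) i
  show colMap S f (S.1.2 k) < 2 * (i.val + 1) ↔ ((S.1.2 k) : ℕ) < ((S.1.1 i) : ℕ)
  rw [← hm]
  unfold colMap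
  omega
lemma PiProj_Ginv (S : FullPlacement n) (hS : ∀ c : Fin n, blockSize S c ≤ 2)
    (f : {c : Fin n // blockSize S c = 1} → Bool) : PiProj (Ginv S hS f) = S := by
  apply Subtype.ext
  apply Prod.ext
  · funext i
    exact Fin.ext (len_Ginv S hS f i)
  · funext j
    exact Fin.ext (rank_Ginv S hS f j)

lemma rank_succ (R : RookPlacement n) {j k : Fin n} (h : (R.1 j : ℕ) = (R.1 k : ℕ) + 1) :
    rankR R j = rankR R k + 1 := by
  unfold rankR
  have heq : (Finset.univ.filter (fun m : Fin n => (R.1 m : ℕ) < (R.1 j : ℕ)))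
      = insert k (Finset.univ.filter (fun m : Fin n => (R.1 m : ℕ) < (R.1 k : ℕ))) := by
    ext m
    simp only [Finset.mem_insert, Finset.mem_filter, Finset.mem_univ, true_and]
    constructor
    · intro hm
      rcases Nat.lt_or_ge (R.1 m : ℕ) (R.1 k : ℕ) with h' | h'
      · right; exact h'
      · left
        have : (R.1 m : ℕ) = (R.1 k : ℕ) := by omega
        exact R.2.1 (Fin.ext this)
    · intro hm; rcases hm with rfl | hm <;> omega
  rw [heq, Finset.card_insert_of_notMem (by simp)]

/-- The bit recording whether the rook of a size-one block sits in the right column. -/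
noncomputable def bitsF (R : RookPlacement n) :
    {c : Fin n // blockSize (PiProj R) c = 1} → Bool :=
  fun c => decide (Occupied R (2 * (n - colHeight (PiProj R) c.1) + 1))

lemma Ginv_bitsF (R : RookPlacement n) :
    Ginv (PiProj R) (PiProj_good R) (bitsF R) = R := by
  apply Subtype.ext
  funext j
  apply Fin.ext
  show colMap (PiProj R) (bitsF R) ((PiProj R).1.2 j) = (R.1 j : ℕ)
  have hblt := block_lt R j
  have hh := colHeight_PiProj R j
  have hbs := blockSize_PiProj R j
  have hbr1 := blockRooks_pos R j
  have hbr2 := blockRooks_le_two R ⟨(R.1 j : ℕ) / 2, block_lt R j⟩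
  have h2 : n - (n - (R.1 j : ℕ) / 2) = (R.1 j : ℕ) / 2 := by omega
  unfold colMap
  rw [hh, h2]
  unfold offs
  by_cases h1 : blockSize (PiProj R) ((PiProj R).1.2 j) = 1
  · rw [dif_pos h1]
    show 2 * ((R.1 j : ℕ) / 2)
      + (decide (Occupied R (2 * (n - colHeight (PiProj R) ((PiProj R).1.2 j)) + 1))).toNat
      = (R.1 j : ℕ)
    rw [hh, h2]
    have hone : blockRooks R ⟨(R.1 j : ℕ) / 2, block_lt R j⟩ = 1 := by rw [← hbs]; exact h1
    have hocc : Occupied R (2 * ((R.1 j : ℕ) / 2) + 1) ↔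
        (R.1 j : ℕ) = 2 * ((R.1 j : ℕ) / 2) + 1 := by
      constructor
      · rintro ⟨k, hk⟩
        have hk2 : (R.1 k : ℕ) / 2 = (R.1 j : ℕ) / 2 := by omega
        have hkmem : k ∈ Finset.univ.filter (fun m : Fin n =>
            (R.1 m : ℕ) / 2 = ((⟨(R.1 j : ℕ) / 2, block_lt R j⟩ : Fin n) : ℕ)) := by
          simp only [Finset.mem_filter, Finset.mem_univ, true_and]
          exact hk2
        have hjmem : j ∈ Finset.univ.filter (fun m : Fin n =>
            (R.1 m : ℕ) / 2 = ((⟨(R.1 j : ℕ) / 2, block_lt R j⟩ : Fin n) : ℕ)) := by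
          simp only [Finset.mem_filter, Finset.mem_univ, true_and]
        have hkj := Finset.card_le_one.1 (le_of_eq hone) k hkmem j hjmem
        rw [hkj] at hk
        omega
      · intro h; exact ⟨j, by omega⟩
    have hpar : (R.1 j : ℕ) = 2 * ((R.1 j : ℕ) / 2) ∨
        (R.1 j : ℕ) = 2 * ((R.1 j : ℕ) / 2) + 1 := by omega
    rcases hpar with hpar | hpar
    · have hdec : (decide (Occupied R (2 * ((R.1 j : ℕ) / 2) + 1))) = false := by
        rw [decide_eq_false_iff_not, hocc]; omega
      rw [hdec]; simp; omega
    · have hdec : (decide (Occupied R (2 * ((R.1 j : ℕ) / 2) + 1))) = true := by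
        rw [decide_eq_true_eq, hocc]; exact hpar
      rw [hdec]; simp; omega
  · rw [dif_neg h1]
    have htwo : blockRooks R ⟨(R.1 j : ℕ) / 2, block_lt R j⟩ = 2 := by
      rcases Nat.lt_or_ge (blockRooks R ⟨(R.1 j : ℕ) / 2, block_lt R j⟩) 2 with h | h
      · exfalso; apply h1; rw [hbs]; omega
      · omega
    obtain ⟨k, hkB, hkj⟩ := Finset.exists_mem_ne
      (show 1 < (Finset.univ.filter (fun m : Fin n =>
        (R.1 m : ℕ) / 2 = ((⟨(R.1 j : ℕ) / 2, block_lt R j⟩ : Fin n) : ℕ))).card from by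
        unfold blockRooks at htwo; omega) j
    have hk2 : (R.1 k : ℕ) / 2 = (R.1 j : ℕ) / 2 := by
      simpa using (Finset.mem_filter.1 hkB).2
    have hkneq : (R.1 k : ℕ) ≠ (R.1 j : ℕ) := fun h => hkj (R.2.1 (Fin.ext h))
    have hpar : (R.1 j : ℕ) = 2 * ((R.1 j : ℕ) / 2) ∨
        (R.1 j : ℕ) = 2 * ((R.1 j : ℕ) / 2) + 1 := by omega
    rcases hpar with hpar | hpar
    · -- even: condition must be false
      rw [if_neg]
      · omega
      rintro ⟨hpos, hheights⟩
      obtain ⟨m, hm⟩ := (PiProj R).2.2.1.2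
        ⟨((PiProj R).1.2 j).val - 1, by have := ((PiProj R).1.2 j).2; omega⟩
      have hhm : colHeight (PiProj R) ((PiProj R).1.2 m) = n - (R.1 j : ℕ) / 2 := by
        rw [hm, hheights, hh]
      rw [colHeight_PiProj R m] at hhm
      have hmblt := block_lt R m
      have hmdiv : (R.1 m : ℕ) / 2 = (R.1 j : ℕ) / 2 := by omega
      have hmval : ((PiProj R).1.2 m).val = ((PiProj R).1.2 j).val - 1 := by rw [hm]
      have hposv : 0 < ((PiProj R).1.2 j).val := hpos
      have hmj : m ≠ j := by
        intro h; rw [h] at hmval; omega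
      have hrk : (R.1 k : ℕ) = (R.1 j : ℕ) + 1 := by omega
      have hrankk : rankR R k = rankR R j + 1 := rank_succ R (by omega)
      have hmk : m ≠ k := by
        intro h
        rw [h] at hmval
        have e1 : ((PiProj R).1.2 k).val = rankR R k := rfl
        have e2 : ((PiProj R).1.2 j).val = rankR R j := rfl
        omega
      have hsub : ({m, k, j} : Finset (Fin n)) ⊆ Finset.univ.filter (fun x : Fin n =>
          (R.1 x : ℕ) / 2 = ((⟨(R.1 j : ℕ) / 2, block_lt R j⟩ : Fin n) : ℕ)) := by
        intro x hx
        simp only [Finset.mem_insert, Finset.mem_singleton] at hx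
        simp only [Finset.mem_filter, Finset.mem_univ, true_and]
        rcases hx with rfl | rfl | rfl
        · exact hmdiv
        · exact hk2
        · rfl
      have h3 : ({m, k, j} : Finset (Fin n)).card = 3 := by
        rw [Finset.card_insert_of_notMem (by simp [hmk, hmj]),
          Finset.card_insert_of_notMem (by simp [hkj]), Finset.card_singleton]
      have h4 := Finset.card_le_card hsub
      unfold blockRooks at htwo
      omega
    · -- odd: condition must be true
      have hrk : (R.1 k : ℕ) + 1 = (R.1 j : ℕ) := by omega
      have hrank : rankR R j = rankR R k + 1 := rank_succ R (by omega)
      rw [if_pos]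
      · omega
      refine ⟨by show 0 < rankR R j; omega, ?_⟩
      have he : (⟨((PiProj R).1.2 j).val - 1,
          (Nat.sub_le _ 1).trans_lt ((PiProj R).1.2 j).2⟩ : Fin n) = (PiProj R).1.2 k := by
        apply Fin.ext
        show rankR R j - 1 = rankR R k
        omega
      rw [he, colHeight_PiProj R k, hh]
      omega

/-- Abbreviation for the right-hand side of the bijection. -/
noncomputable def Fwd (R : RookPlacement n) :
    Σ S : {S : FullPlacement n // ∀ c : Fin n, blockSize S c ≤ 2},
      ({c : Fin n // blockSize S.1 c = 1} → Bool) :=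
  ⟨⟨PiProj R, PiProj_good R⟩, bitsF R⟩

noncomputable def Bwd (P : Σ S : {S : FullPlacement n // ∀ c : Fin n, blockSize S c ≤ 2},
    ({c : Fin n // blockSize S.1 c = 1} → Bool)) : RookPlacement n :=
  Ginv P.1.1 P.1.2 P.2

lemma sigma_bits_ext
    {P Q : Σ S : {S : FullPlacement n // ∀ c : Fin n, blockSize S c ≤ 2},
      ({c : Fin n // blockSize S.1 c = 1} → Bool)}
    (h1 : P.1 = Q.1)
    (h2 : ∀ (c : Fin n) (hc : blockSize P.1.1 c = 1), P.2 ⟨c, hc⟩ = Q.2 ⟨c, h1 ▸ hc⟩) :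
    P = Q := by
  obtain ⟨S1, f1⟩ := P
  obtain ⟨S2, f2⟩ := Q
  cases h1
  have : f1 = f2 := by
    funext c
    obtain ⟨c, hc⟩ := c
    exact h2 c hc
  rw [this]

lemma occupied_Ginv_iff (S : FullPlacement n) (hS : ∀ c : Fin n, blockSize S c ≤ 2)
    (f : {c : Fin n // blockSize S c = 1} → Bool) (x : ℕ) :
    Occupied (Ginv S hS f) x ↔ ∃ c : Fin n, colMap S f c = x := by
  constructor
  · rintro ⟨j, hj⟩
    exact ⟨S.1.2 j, hj⟩
  · rintro ⟨c, hc⟩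
    obtain ⟨j, hj⟩ := S.2.2.1.2 c
    refine ⟨j, ?_⟩
    show colMap S f (S.1.2 j) = x
    rw [hj, hc]

lemma Fwd_Bwd (P : Σ S : {S : FullPlacement n // ∀ c : Fin n, blockSize S c ≤ 2},
    ({c : Fin n // blockSize S.1 c = 1} → Bool)) : Fwd (Bwd P) = P := by
  obtain ⟨⟨S, hS⟩, f⟩ := P
  have hPi : PiProj (Ginv S hS f) = S := PiProj_Ginv S hS f
  have h1 : (Fwd (Bwd ⟨⟨S, hS⟩, f⟩)).1
      = (⟨⟨S, hS⟩, f⟩ : Σ S : {S : FullPlacement n // ∀ c : Fin n, blockSize S c ≤ 2},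
        ({c : Fin n // blockSize S.1 c = 1} → Bool)).1 := Subtype.ext hPi
  refine sigma_bits_ext h1 ?_
  intro c hc
  have hc' : blockSize S c = 1 := by rw [← hPi]; exact hc
  show decide (Occupied (Ginv S hS f) (2 * (n - colHeight (PiProj (Ginv S hS f)) c) + 1))
      = f ⟨c, hc'⟩
  rw [hPi]
  have h3 := colHeight_pos S c
  have h4 := colHeight_le S c
  have hiff : Occupied (Ginv S hS f) (2 * (n - colHeight S c) + 1)
      ↔ f ⟨c, hc'⟩ = true := by
    rw [occupied_Ginv_iff]
    constructor
    · rintro ⟨c', hc2⟩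
      have ho := offs_le S f c'
      have h5 := colHeight_pos S c'
      have h6 := colHeight_le S c'
      unfold colMap at hc2
      have hhe : colHeight S c' = colHeight S c := by omega
      have hcc : c' = c := by
        by_contra hne
        have hsub : ({c', c} : Finset (Fin n)) ⊆ Finset.univ.filter
            (fun x : Fin n => colHeight S x = colHeight S c) := by
          intro x hx
          simp only [Finset.mem_insert, Finset.mem_singleton] at hx
          simp only [Finset.mem_filter, Finset.mem_univ, true_and]
          rcases hx with rfl | rfl
          · exact hhe
          · rfl
        have hcard : ({c', c} : Finset (Fin n)).card = 2 := by
          rw [Finset.card_insert_of_notMem (by simp [hne]), Finset.card_singleton]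
        have := Finset.card_le_card hsub
        unfold blockSize at hc'
        omega
      rw [hcc] at hc2
      unfold offs at hc2
      rw [dif_pos hc'] at hc2
      cases hb : f ⟨c, hc'⟩
      · rw [hb] at hc2
        simp only [Bool.toNat_false] at hc2
        omega
      · rfl
    · intro hb
      refine ⟨c, ?_⟩
      unfold colMap offs
      rw [dif_pos hc', hb]
      simp
  cases hb : f ⟨c, hc'⟩
  · rw [decide_eq_false_iff_not, hiff, hb]
    simp
  · rw [decide_eq_true_eq, hiff]
    exact hb

noncomputable def mainEquiv :
    RookPlacement n ≃ Σ S : {S : FullPlacement n // ∀ c : Fin n, blockSize S c ≤ 2},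
      ({c : Fin n // blockSize S.1 c = 1} → Bool) where
  toFun := Fwd
  invFun := Bwd
  left_inv R := Ginv_bitsF R
  right_inv := Fwd_Bwd

end PartB


/-- Summing `2^{bso S}` over all full rook placements `S` on `n`-row Young
diagrams all of whose blocks have size at most `2` (these are exactly the
images of the empty-column-deletion projection `Π_n` from rook placements on
`2δ_n`) gives `(n+1)!`. -/
theorem sum_two_pow_bso (n : ℕ) :
    ∑ S : {S : FullPlacement n // ∀ c : Fin n, blockSize S c ≤ 2},
        2 ^ bso S.1 = Nat.factorial (n + 1) := by
  have h1 : ∀ S : {S : FullPlacement n // ∀ c : Fin n, blockSize S c ≤ 2},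
      2 ^ bso S.1 = Fintype.card ({c : Fin n // blockSize S.1 c = 1} → Bool) := by
    intro S
    rw [Fintype.card_fun, Fintype.card_bool, Fintype.card_subtype]
    rfl
  rw [Finset.sum_congr rfl (fun S _ => h1 S), ← Fintype.card_sigma,
    ← Fintype.card_congr (mainEquiv (n := n)), card_rook]
end

section
/- The image of the projection Π_n (which deletes all empty columns from a rook placement on the double staircase 2δ_n) is exactly the set of full rook placements S on Young diagrams with n rows such that every block of S has size at most 2. -/
attribute [local instance] Classical.propDecidable

/-- `Projects R S` says that `S` is obtained from the rook placement `R` on the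
double staircase `2δ_n` by deleting all empty columns (the projection `Π_n`):
the length of row `i` of `S` is the number of occupied columns of `R` among the
`2(i+1)` columns of row `i`, and the column of the rook of row `i` in `S` is
the number of occupied columns of `R` strictly to the left of the rook of row
`i` of `R`. -/
def Projects {n : ℕ} (R : RookPlacement n) (S : FullPlacement n) : Prop :=
  (∀ i : Fin n, (S.1.1 i : ℕ) =
      (Finset.univ.filter
        (fun c : Fin (2 * n) => Occupied R (c : ℕ) ∧ (c : ℕ) < 2 * (i.val + 1))).card) ∧
  (∀ i : Fin n, (S.1.2 i : ℕ) =
      (Finset.univ.filter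
        (fun c : Fin (2 * n) => Occupied R (c : ℕ) ∧ (c : ℕ) < (R.1 i : ℕ))).card)

namespace ImageProj
open Finset

variable {n : ℕ}

lemma mono' (S : FullPlacement n) {i j : Fin n} (h : i ≤ j) :
    (S.1.1 i : ℕ) ≤ (S.1.1 j : ℕ) := S.2.1 i j h

lemma row_ge (S : FullPlacement n) (i : Fin n) : i.val + 1 ≤ (S.1.1 i : ℕ) := by
  have hinj : Function.Injective (fun j : Fin n => (S.1.2 j : ℕ)) :=
    fun a b hab => S.2.2.1.1 (Fin.val_injective hab)
  have hsub : (Finset.Iic i).image (fun j => (S.1.2 j : ℕ)) ⊆ Finset.range (S.1.1 i : ℕ) := by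
    intro x hx
    simp only [Finset.mem_image, Finset.mem_Iic] at hx
    obtain ⟨j, hj, rfl⟩ := hx
    exact Finset.mem_range.2 (lt_of_lt_of_le (S.2.2.2 j) (mono' S hj))
  have hc := Finset.card_le_card hsub
  rwa [Finset.card_image_of_injective _ hinj, Fin.card_Iic, Finset.card_range] at hc

noncomputable def Hnat (S : FullPlacement n) (c : ℕ) : ℕ :=
  (univ.filter (fun i : Fin n => c < (S.1.1 i : ℕ))).card

lemma colHeight_eq (S : FullPlacement n) (c : Fin n) : colHeight S c = Hnat S c.val := by
  simp [colHeight, Hnat]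

lemma Hnat_antitone (S : FullPlacement n) {c c' : ℕ} (h : c ≤ c') : Hnat S c' ≤ Hnat S c := by
  apply Finset.card_le_card
  intro i hi
  simp only [Finset.mem_filter, Finset.mem_univ, true_and] at hi ⊢
  omega

lemma no_val_of_Hnat_eq (S : FullPlacement n) {c : ℕ} (h : Hnat S c = Hnat S (c+1)) :
    ∀ j : Fin n, (S.1.1 j : ℕ) ≠ c + 1 := by
  intro j hj
  have hsub : (univ.filter (fun i : Fin n => c+1 < (S.1.1 i : ℕ))) ⊆
      (univ.filter fun i : Fin n => c < (S.1.1 i : ℕ)) :=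
 by
    intro i hi
    simp only [Finset.mem_filter, Finset.mem_univ, true_and] at hi ⊢
    omega
  have heq := Finset.eq_of_subset_of_card_le hsub (le_of_eq h)
  have hmem : j ∈ univ.filter (fun i : Fin n => c < (S.1.1 i : ℕ)) := by
    simp [hj]
  rw [← heq] at hmem
  simp [hj] at hmem

lemma three_le_blockSize (S : FullPlacement n) (a : ℕ) (ha : a + 2 < n)
    (hno : ∀ j : Fin n, (S.1.1 j : ℕ) ≤ a ∨ a + 3 ≤ (S.1.1 j : ℕ)) :
    3 ≤ blockSize S ⟨a, by omega⟩ := by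
  have key : ∀ c : ℕ, a ≤ c → c ≤ a + 2 → Hnat S c = Hnat S a := by
    intro c h1 h2
    unfold Hnat
    congr 1
    apply Finset.filter_congr
    intro j _
    rcases hno j with h | h
    · constructor <;> intro <;> omega
    · constructor <;> intro <;> omega
  have h1 : colHeight S ⟨a+1, by omega⟩ = colHeight S ⟨a, by omega⟩ := by
    rw [colHeight_eq, colHeight_eq]; exact key (a+1) (by omega) (by omega)
  have h2 : colHeight S ⟨a+2, by omega⟩ = colHeight S ⟨a, by omega⟩ := by
    rw [colHeight_eq, colHeight_eq]; exact key (a+2) (by omega) (by omega)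
  have hsub : ({⟨a, by omega⟩, ⟨a+1, by omega⟩, ⟨a+2, by omega⟩} : Finset (Fin n)) ⊆
      univ.filter (fun c' : Fin n => colHeight S c' = colHeight S ⟨a, by omega⟩) := by
    intro z hz
    simp only [Finset.mem_insert, Finset.mem_singleton] at hz
    rcases hz with rfl | rfl | rfl <;> simp [h1, h2]
  have hcard : ({⟨a, by omega⟩, ⟨a+1, by omega⟩, ⟨a+2, by omega⟩} : Finset (Fin n)).card = 3 := by
    rw [Finset.card_insert_of_notMem (by simp [Fin.ext_iff]),
      Finset.card_insert_of_notMem (by simp [Fin.ext_iff]), Finset.card_singleton]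
  calc 3 = _ := hcard.symm
    _ ≤ _ := Finset.card_le_card hsub

lemma L0_le (S : FullPlacement n) (hb : ∀ c, blockSize S c ≤ 2) (h : 0 < n) :
    (S.1.1 ⟨0, h⟩ : ℕ) ≤ 2 := by
  by_contra hc
  push_neg at hc
  have hub : (S.1.1 ⟨0, h⟩ : ℕ) ≤ n := by
    have := (S.1.1 ⟨0, h⟩).is_lt; omega
  have h3 := three_le_blockSize S 0 (by omega) ?_
  · have := hb ⟨0, by omega⟩; omega
  · intro j
    right
    have hle : (⟨0, h⟩ : Fin n) ≤ j := Fin.le_def.2 (Nat.zero_le _)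
    have := mono' S hle; omega

lemma step_le (S : FullPlacement n) (hb : ∀ c, blockSize S c ≤ 2) (i j : Fin n)
    (hij : (j : ℕ) = (i : ℕ) + 1) :
    (S.1.1 j : ℕ) ≤ (S.1.1 i : ℕ) + 2 := by
  by_contra hc
  push_neg at hc
  have hub : (S.1.1 j : ℕ) ≤ n := by
    have := (S.1.1 j).is_lt; omega
  have h3 := three_le_blockSize S (S.1.1 i : ℕ) (by omega) ?_
  · have := hb ⟨(S.1.1 i : ℕ), by omega⟩; omega
  · intro k
    rcases le_or_gt k i with hk | hk
    · left; exact mono' S hk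
    · right
      have hle : j ≤ k := by
        rw [Fin.le_def]
        have := Fin.lt_def.1 hk
        omega
      have := mono' S hle; omega

lemma blocks_le_two (S : FullPlacement n)
    (h0 : ∀ h : 0 < n, (S.1.1 ⟨0, h⟩ : ℕ) ≤ 2)
    (hstep : ∀ i j : Fin n, (j : ℕ) = (i : ℕ) + 1 →
      (S.1.1 j : ℕ) ≤ (S.1.1 i : ℕ) + 2)
    (c : Fin n) : blockSize S c ≤ 2 := by
  by_contra hcon
  push_neg at hcon
  unfold blockSize at hcon
  rw [Finset.two_lt_card_iff] at hcon
  obtain ⟨u, v, w, hu, hv, hw, huv, huw, hvw⟩ := hcon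
  simp only [Finset.mem_filter, Finset.mem_univ, true_and] at hu hv hw
  have huv' : (u : ℕ) ≠ (v : ℕ) := fun h => huv (Fin.ext h)
  have huw' : (u : ℕ) ≠ (w : ℕ) := fun h => huw (Fin.ext h)
  have hvw' : (v : ℕ) ≠ (w : ℕ) := fun h => hvw (Fin.ext h)
  obtain ⟨x, y, hx, hy, hgap⟩ :
      ∃ x y : Fin n, colHeight S x = colHeight S c ∧ colHeight S y = colHeight S c ∧
        (x : ℕ) + 2 ≤ (y : ℕ) := by
    rcases le_total (u : ℕ) (v : ℕ) with h1 | h1 <;>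
      rcases le_total (v : ℕ) (w : ℕ) with h2 | h2 <;>
        rcases le_total (u : ℕ) (w : ℕ) with h3 | h3
    all_goals first
      | exact ⟨u, w, hu, hw, by omega⟩
      | exact ⟨w, u, hw, hu, by omega⟩
      | exact ⟨u, v, hu, hv, by omega⟩
      | exact ⟨v, u, hv, hu, by omega⟩
      | exact ⟨v, w, hv, hw, by omega⟩
      | exact ⟨w, v, hw, hv, by omega⟩
  have hHxy : Hnat S (x : ℕ) = Hnat S (y : ℕ) := by
    rw [← colHeight_eq, ← colHeight_eq, hx, hy]
  have hA : Hnat S (y : ℕ) ≤ Hnat S ((x : ℕ) + 1) := Hnat_antitone S (by omega)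
  have hB : Hnat S ((x : ℕ) + 1) ≤ Hnat S (x : ℕ) := Hnat_antitone S (by omega)
  have hC : Hnat S (y : ℕ) ≤ Hnat S ((x : ℕ) + 2) := Hnat_antitone S (by omega)
  have hD : Hnat S ((x : ℕ) + 2) ≤ Hnat S ((x : ℕ) + 1) := Hnat_antitone S (by omega)
  have h1 : Hnat S (x : ℕ) = Hnat S ((x : ℕ) + 1) := by omega
  have h2 : Hnat S ((x : ℕ) + 1) = Hnat S ((x : ℕ) + 2) := by omega
  have hno1 := no_val_of_Hnat_eq S h1
  have hno2 := no_val_of_Hnat_eq S h2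
  have hn0 : 0 < n := x.pos
  have hlast : (S.1.1 ⟨n-1, by omega⟩ : ℕ) = n := by
    have h1' := row_ge S ⟨n-1, by omega⟩
    have h2' := (S.1.1 ⟨n-1, by omega⟩).is_lt
    simp only [Fin.val_mk] at h1'
    omega
  have hex : ∃ m : ℕ, ∃ hm : m < n, (x : ℕ) < (S.1.1 ⟨m, hm⟩ : ℕ) := by
    refine ⟨n-1, by omega, ?_⟩
    rw [hlast]
    have := y.is_lt
    omega
  classical
  have hm0n := (Nat.find_spec hex).1
  have hj0 : (x : ℕ) < (S.1.1 ⟨Nat.find hex, hm0n⟩ : ℕ) := (Nat.find_spec hex).2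
  have hge3 : (x : ℕ) + 3 ≤ (S.1.1 ⟨Nat.find hex, hm0n⟩ : ℕ) := by
    have t1 := hno1 ⟨Nat.find hex, hm0n⟩
    have t2 := hno2 ⟨Nat.find hex, hm0n⟩
    omega
  rcases Nat.eq_zero_or_pos (Nat.find hex) with hz | hz
  · have h00 := h0 hn0
    have heq : (⟨Nat.find hex, hm0n⟩ : Fin n) = ⟨0, hn0⟩ := Fin.ext hz
    rw [heq] at hge3
    omega
  · have hmlt : Nat.find hex - 1 < n := by omega
    have hprev : (S.1.1 ⟨Nat.find hex - 1, hmlt⟩ : ℕ) ≤ (x : ℕ) := by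
      by_contra hp
      push_neg at hp
      exact Nat.find_min hex (show Nat.find hex - 1 < Nat.find hex by omega) ⟨hmlt, hp⟩
    have hst := hstep ⟨Nat.find hex - 1, hmlt⟩ ⟨Nat.find hex, hm0n⟩ (by simp; omega)
    omega

lemma card_band_le (m a b : ℕ) (P : ℕ → Prop) :
    (univ.filter (fun c : Fin m => P (c : ℕ) ∧ a ≤ (c : ℕ) ∧ (c : ℕ) < b)).card ≤ b - a := by
  have h := Finset.card_le_card_of_injOn (f := fun c : Fin m => (c : ℕ))
    (s := univ.filter (fun c : Fin m => P (c : ℕ) ∧ a ≤ (c : ℕ) ∧ (c : ℕ) < b))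
    (t := Finset.Ico a b)
    (fun c hc => by
      simp only [Finset.mem_coe, Finset.mem_filter, Finset.mem_univ, true_and] at hc
      exact Finset.mem_Ico.2 ⟨hc.2.1, hc.2.2⟩)
    (fun c _ c' _ h => Fin.ext h)
  rwa [Nat.card_Ico] at h

lemma forward (S : FullPlacement n) (R : RookPlacement n) (hp : Projects R S)
    (c : Fin n) : blockSize S c ≤ 2 := by
  apply blocks_le_two S
  · intro h
    rw [hp.1 ⟨0, h⟩]
    refine le_trans (Finset.card_le_card ?_) (card_band_le (2*n) 0 2 (Occupied R))
    intro z hz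
    simp only [Finset.mem_filter, Finset.mem_univ, true_and] at hz ⊢
    exact ⟨hz.1, Nat.zero_le _, hz.2⟩
  · intro i j hij
    rw [hp.1 i, hp.1 j]
    have hsub : (univ.filter fun cc : Fin (2*n) =>
          Occupied R (cc : ℕ) ∧ (cc : ℕ) < 2*((j : ℕ)+1)) ⊆
        (univ.filter fun cc : Fin (2*n) =>
          Occupied R (cc : ℕ) ∧ (cc : ℕ) < 2*((i : ℕ)+1)) ∪
        (univ.filter fun cc : Fin (2*n) =>
          Occupied R (cc : ℕ) ∧ 2*((i : ℕ)+1) ≤ (cc : ℕ) ∧ (cc : ℕ) < 2*((i : ℕ)+1)+2) := by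
      intro z hz
      simp only [Finset.mem_filter, Finset.mem_univ, true_and, Finset.mem_union] at hz ⊢
      rcases hz with ⟨hO, hlt⟩
      by_cases hz2 : (z : ℕ) < 2*((i : ℕ)+1)
      · exact Or.inl ⟨hO, hz2⟩
      · exact Or.inr ⟨hO, by omega, by omega⟩
    have h2 := card_band_le (2*n) (2*((i : ℕ)+1)) (2*((i : ℕ)+1)+2) (Occupied R)
    have h3 := Finset.card_le_card hsub
    have h4 := Finset.card_union_le
      (univ.filter fun cc : Fin (2*n) =>
        Occupied R (cc : ℕ) ∧ (cc : ℕ) < 2*((i : ℕ)+1))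
      (univ.filter fun cc : Fin (2*n) =>
        Occupied R (cc : ℕ) ∧ 2*((i : ℕ)+1) ≤ (cc : ℕ) ∧ (cc : ℕ) < 2*((i : ℕ)+1)+2)
    omega

noncomputable def Lam (S : FullPlacement n) (i : ℕ) : ℕ :=
  if h : i < n then (S.1.1 ⟨i, h⟩ : ℕ) else n

lemma Lam_mono (S : FullPlacement n) : Monotone (Lam S) := by
  intro i j hij
  unfold Lam
  by_cases hi : i < n
  · by_cases hj : j < n
    · rw [dif_pos hi, dif_pos hj]
      exact mono' S (by rw [Fin.le_def]; exact hij)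
    · rw [dif_pos hi, dif_neg hj]
      have := (S.1.1 ⟨i, hi⟩).is_lt
      omega
  · have hj : ¬ j < n := by omega
    rw [dif_neg hi, dif_neg hj]

lemma Lam_fin (S : FullPlacement n) (i : Fin n) : Lam S (i : ℕ) = (S.1.1 i : ℕ) := by
  unfold Lam
  rw [dif_pos i.is_lt]

lemma Lam_last (S : FullPlacement n) (h : 0 < n) : Lam S (n-1) = n := by
  unfold Lam
  rw [dif_pos (by omega : n - 1 < n)]
  have h1 := row_ge S ⟨n-1, by omega⟩
  have h2 := (S.1.1 ⟨n-1, by omega⟩).is_lt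
  simp only [Fin.val_mk] at h1
  omega

lemma Lam_step (S : FullPlacement n)
    (hstep : ∀ i j : Fin n, (j : ℕ) = (i : ℕ) + 1 →
      (S.1.1 j : ℕ) ≤ (S.1.1 i : ℕ) + 2) (i : ℕ) :
    Lam S (i+1) ≤ Lam S i + 2 := by
  unfold Lam
  by_cases h1 : i + 1 < n
  · rw [dif_pos h1, dif_pos (by omega : i < n)]
    exact hstep ⟨i, by omega⟩ ⟨i+1, h1⟩ rfl
  · by_cases h2 : i < n
    · rw [dif_neg h1, dif_pos h2]
      have := row_ge S ⟨i, h2⟩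
      simp only [Fin.val_mk] at this
      omega
    · rw [dif_neg h1, dif_neg h2]
      omega

lemma Lam_zero (S : FullPlacement n) (h0 : ∀ h : 0 < n, (S.1.1 ⟨0, h⟩ : ℕ) ≤ 2)
    (hn : 0 < n) : Lam S 0 ≤ 2 := by
  unfold Lam
  rw [dif_pos hn]
  exact h0 hn

lemma Lam_ex (S : FullPlacement n) (k : Fin n) : ∃ i, (k : ℕ) < Lam S i :=
  ⟨n, by unfold Lam; rw [dif_neg (lt_irrefl n)]; exact k.is_lt⟩

noncomputable def gg (S : FullPlacement n) (k : Fin n) : ℕ := Nat.find (Lam_ex S k)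

lemma gg_spec (S : FullPlacement n) (k : Fin n) : (k : ℕ) < Lam S (gg S k) :=
  Nat.find_spec (Lam_ex S k)

lemma gg_min (S : FullPlacement n) (k : Fin n) {j : ℕ} (h : j < gg S k) :
    Lam S j ≤ (k : ℕ) := by
  have := Nat.find_min (Lam_ex S k) h
  omega

lemma gg_le_iff (S : FullPlacement n) (k : Fin n) (j : ℕ) :
    gg S k ≤ j ↔ (k : ℕ) < Lam S j := by
  constructor
  · intro h
    exact lt_of_lt_of_le (gg_spec S k) (Lam_mono S h)
  · intro h
    exact Nat.find_le h

lemma gg_lt (S : FullPlacement n) (k : Fin n) : gg S k < n := by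
  have h0 : 0 < n := k.pos
  have hle : gg S k ≤ n - 1 := by
    rw [gg_le_iff, Lam_last S h0]
    exact k.is_lt
  omega

noncomputable def Lpre (S : FullPlacement n) (j : ℕ) : ℕ :=
  if j = 0 then 0 else Lam S (j-1)

noncomputable def phi (S : FullPlacement n) (k : Fin n) : ℕ :=
  2 * gg S k + ((k : ℕ) - Lpre S (gg S k))

lemma Lpre_le (S : FullPlacement n) (k : Fin n) : Lpre S (gg S k) ≤ (k : ℕ) := by
  unfold Lpre
  by_cases h : gg S k = 0
  · rw [if_pos h]; omega
  · rw [if_neg h]; exact gg_min S k (by omega)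

lemma off_le (S : FullPlacement n) (h0 : ∀ h : 0 < n, (S.1.1 ⟨0, h⟩ : ℕ) ≤ 2)
    (hstep : ∀ i j : Fin n, (j : ℕ) = (i : ℕ) + 1 →
      (S.1.1 j : ℕ) ≤ (S.1.1 i : ℕ) + 2) (k : Fin n) :
    (k : ℕ) - Lpre S (gg S k) ≤ 1 := by
  unfold Lpre
  by_cases h : gg S k = 0
  · rw [if_pos h]
    have h1 := gg_spec S k
    rw [h] at h1
    have h2 := Lam_zero S h0 k.pos
    omega
  · rw [if_neg h]
    have h1 := gg_min S k (show gg S k - 1 < gg S k by omega)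
    have h2 := gg_spec S k
    have h3 := Lam_step S hstep (gg S k - 1)
    rw [show gg S k - 1 + 1 = gg S k by omega] at h3
    omega

lemma phi_lt (S : FullPlacement n) (h0 : ∀ h : 0 < n, (S.1.1 ⟨0, h⟩ : ℕ) ≤ 2)
    (hstep : ∀ i j : Fin n, (j : ℕ) = (i : ℕ) + 1 →
      (S.1.1 j : ℕ) ≤ (S.1.1 i : ℕ) + 2) (k : Fin n) :
    phi S k < 2 * n := by
  unfold phi
  have := gg_lt S k
  have := off_le S h0 hstep k
  omega

lemma phi_lt_iff (S : FullPlacement n) (h0 : ∀ h : 0 < n, (S.1.1 ⟨0, h⟩ : ℕ) ≤ 2)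
    (hstep : ∀ i j : Fin n, (j : ℕ) = (i : ℕ) + 1 →
      (S.1.1 j : ℕ) ≤ (S.1.1 i : ℕ) + 2) (k : Fin n) (j : ℕ) :
    phi S k < 2 * (j + 1) ↔ gg S k ≤ j := by
  unfold phi
  have := off_le S h0 hstep k
  constructor <;> intro <;> omega

lemma phi_mono (S : FullPlacement n) (h0 : ∀ h : 0 < n, (S.1.1 ⟨0, h⟩ : ℕ) ≤ 2)
    (hstep : ∀ i j : Fin n, (j : ℕ) = (i : ℕ) + 1 →
      (S.1.1 j : ℕ) ≤ (S.1.1 i : ℕ) + 2) {k k' : Fin n} (h : (k : ℕ) < (k' : ℕ)) :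
    phi S k < phi S k' := by
  have hg : gg S k ≤ gg S k' := by
    rw [gg_le_iff]
    exact lt_of_le_of_lt (le_of_lt h) (gg_spec S k')
  rcases eq_or_lt_of_le hg with he | hl
  · have h1 := Lpre_le S k
    unfold phi
    rw [← he]
    omega
  · have h1 := off_le S h0 hstep k
    unfold phi
    omega

lemma phi_inj (S : FullPlacement n) (h0 : ∀ h : 0 < n, (S.1.1 ⟨0, h⟩ : ℕ) ≤ 2)
    (hstep : ∀ i j : Fin n, (j : ℕ) = (i : ℕ) + 1 →
      (S.1.1 j : ℕ) ≤ (S.1.1 i : ℕ) + 2) {k k' : Fin n} (h : phi S k = phi S k') :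
    k = k' := by
  rcases lt_trichotomy (k : ℕ) (k' : ℕ) with hl | he | hl
  · exact absurd h (ne_of_lt (phi_mono S h0 hstep hl))
  · exact Fin.ext he
  · exact absurd h.symm (ne_of_lt (phi_mono S h0 hstep hl))

lemma card_filter_fin_lt (m : ℕ) (hm : m ≤ n) :
    (univ.filter fun k : Fin n => (k : ℕ) < m).card = m := by
  have h := Finset.card_bij (s := univ.filter fun k : Fin n => (k : ℕ) < m)
    (t := Finset.range m) (fun (k : Fin n) _ => (k : ℕ)) ?_ ?_ ?_
  · rw [h, Finset.card_range]
  · intro a ha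
    simp only [Finset.mem_filter] at ha
    exact Finset.mem_range.2 ha.2
  · intro a _ b _ h
    exact Fin.ext h
  · intro b hb
    have hb' := Finset.mem_range.1 hb
    exact ⟨⟨b, by omega⟩, by simp [hb'], rfl⟩

lemma card_filter_iff {α : Type*} [Fintype α] {p q : α → Prop}
    {instp : DecidablePred p} {instq : DecidablePred q} (h : ∀ a, p a ↔ q a) :
    (@Finset.filter α p instp univ).card = (@Finset.filter α q instq univ).card :=
  congrArg Finset.card (@Finset.filter_congr α p q instp instq univ (fun a _ => h a))

lemma count_eq (S : FullPlacement n) (h0 : ∀ h : 0 < n, (S.1.1 ⟨0, h⟩ : ℕ) ≤ 2)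
    (hstep : ∀ i j : Fin n, (j : ℕ) = (i : ℕ) + 1 →
      (S.1.1 j : ℕ) ≤ (S.1.1 i : ℕ) + 2)
    (B : ℕ → Prop) (m : ℕ) (hm : m ≤ n)
    (hB : ∀ k : Fin n, B (phi S k) ↔ (k : ℕ) < m) :
    (univ.filter fun c : Fin (2*n) =>
      (∃ k : Fin n, phi S k = (c : ℕ)) ∧ B (c : ℕ)).card = m := by
  have himg : (univ.filter fun c : Fin (2*n) =>
        (∃ k : Fin n, phi S k = (c : ℕ)) ∧ B (c : ℕ)) =
      (univ.filter fun k : Fin n => (k : ℕ) < m).image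
        (fun k => (⟨phi S k, phi_lt S h0 hstep k⟩ : Fin (2*n))) := by
    ext c
    simp only [Finset.mem_filter, Finset.mem_univ, true_and, Finset.mem_image]
    constructor
    · rintro ⟨⟨k, hk⟩, hBc⟩
      refine ⟨k, ?_, Fin.ext hk⟩
      rw [← hB k, hk]
      exact hBc
    · rintro ⟨k, hk, rfl⟩
      exact ⟨⟨k, rfl⟩, (hB k).2 hk⟩
  rw [himg, Finset.card_image_of_injective _
    (fun a b h => phi_inj S h0 hstep (by simpa [Fin.ext_iff] using h)),
    card_filter_fin_lt m hm]

lemma backward (S : FullPlacement n) (hb : ∀ c, blockSize S c ≤ 2) :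
    ∃ R : RookPlacement n, Projects R S := by
  have h0 : ∀ h : 0 < n, (S.1.1 ⟨0, h⟩ : ℕ) ≤ 2 := fun h => L0_le S hb h
  have hstep : ∀ i j : Fin n, (j : ℕ) = (i : ℕ) + 1 →
      (S.1.1 j : ℕ) ≤ (S.1.1 i : ℕ) + 2 := fun i j hij => step_le S hb i j hij
  have hinj : Function.Injective
      (fun i : Fin n => (⟨phi S (S.1.2 i), phi_lt S h0 hstep (S.1.2 i)⟩ : Fin (2*n))) := by
    intro a b h
    simp only [Fin.mk.injEq] at h
    exact S.2.2.1.1 (phi_inj S h0 hstep h)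
  have hprop : ∀ i : Fin n,
      (((⟨phi S (S.1.2 i), phi_lt S h0 hstep (S.1.2 i)⟩ : Fin (2*n))) : ℕ) < 2 * ((i : ℕ) + 1) := by
    intro i
    show phi S (S.1.2 i) < 2 * ((i : ℕ) + 1)
    rw [phi_lt_iff S h0 hstep, gg_le_iff, Lam_fin]
    exact S.2.2.2 i
  have hocc : ∀ c : ℕ, (∃ j : Fin n, phi S (S.1.2 j) = c) ↔ (∃ k : Fin n, phi S k = c) := by
    intro c
    constructor
    · rintro ⟨j, hj⟩
      exact ⟨S.1.2 j, hj⟩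
    · rintro ⟨k, hk⟩
      obtain ⟨j, rfl⟩ := S.2.2.1.2 k
      exact ⟨j, hk⟩
  refine ⟨⟨fun i => ⟨phi S (S.1.2 i), phi_lt S h0 hstep (S.1.2 i)⟩, hinj, hprop⟩, ?_, ?_⟩
  · intro i
    exact (count_eq S h0 hstep (fun x => x < 2 * ((i : ℕ) + 1)) (S.1.1 i : ℕ)
        (by have := (S.1.1 i).is_lt; omega)
        (fun k => by
          show phi S k < 2 * ((i : ℕ) + 1) ↔ _
          rw [phi_lt_iff S h0 hstep, gg_le_iff, Lam_fin])).symm.trans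
      (card_filter_iff (fun c => and_congr ((hocc (c : ℕ)).symm) Iff.rfl))
  · intro i
    have hB : ∀ k : Fin n, phi S k < phi S (S.1.2 i) ↔ (k : ℕ) < (S.1.2 i : ℕ) := by
      intro k
      constructor
      · intro h
        by_contra h'
        push_neg at h'
        rcases eq_or_lt_of_le h' with he | hl
        · rw [Fin.ext he] at h
          exact lt_irrefl _ h
        · exact absurd (phi_mono S h0 hstep hl) (by omega)
      · exact fun h => phi_mono S h0 hstep h
    exact (count_eq S h0 hstep (fun x => x < phi S (S.1.2 i)) (S.1.2 i : ℕ)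
        (le_of_lt (S.1.2 i).is_lt)
        (fun k => hB k)).symm.trans
      (card_filter_iff (fun c => and_congr ((hocc (c : ℕ)).symm) Iff.rfl))

end ImageProj

/-- The image of the projection `Π_n` (deleting all empty columns of a rook
placement on the double staircase `2δ_n`) is exactly the set of full rook
placements `S` on Young diagrams with `n` rows all of whose blocks have size
at most `2`. -/
theorem image_of_projection (n : ℕ) (S : FullPlacement n) :
    (∃ R : RookPlacement n, Projects R S) ↔ ∀ c : Fin n, blockSize S c ≤ 2 := by
  constructor
  · rintro ⟨R, hR⟩ c
    exact ImageProj.forward S R hR c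
  · exact fun hb => ImageProj.backward S hb
end

section
/- For every full rook placement S on a Young diagram with n rows all of whose blocks have size at most 2, the fiber Π_n^{-1}(S) of the empty-column-deletion projection from rook placements on 2δ_n has cardinality 2^{bso(S)}, where bso(S) is the number of blocks of size 1 in S. -/
attribute [local instance] Classical.propDecidable

namespace FiberProof

attribute [local instance] Classical.propDecidable

open Finset

lemma card_filter_lt (n m : ℕ) (hm : m ≤ n) :
    (Finset.filter (fun k : Fin n => (k : ℕ) < m) Finset.univ).card = m := by
  rw [← Fintype.card_subtype]
  rw [Fintype.card_congr (⟨fun x => ⟨x.1.1, x.2⟩, fun y => ⟨⟨y.1, lt_of_lt_of_le y.2 hm⟩, y.2⟩,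
    fun x => rfl, fun y => rfl⟩ : {k : Fin n // (k : ℕ) < m} ≃ Fin m)]
  exact Fintype.card_fin m

variable {n : ℕ} (S : FullPlacement n)

/-- Block index of the column of rank `c`. -/
def bb (c : ℕ) : ℕ := (Finset.univ.filter fun j : Fin n => (S.1.1 j : ℕ) ≤ c).card

/-- Number of ranks in block `m` (= size of block `m` of the diagram of `S`). -/
def dd (m : ℕ) : ℕ := (Finset.univ.filter fun k : Fin n => bb S (k : ℕ) = m).card

/-- Offset of rank `k` within its block. -/
def off (k : ℕ) : ℕ :=
  (Finset.univ.filter fun k' : Fin n => bb S (k' : ℕ) = bb S k ∧ (k' : ℕ) < k).card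

def col (g : ℕ → Bool) (k : ℕ) : ℕ :=
  2 * bb S k + (if dd S (bb S k) = 1 then (g (bb S k)).toNat else off S k)

lemma mono1 {i j : Fin n} (h : (i : ℕ) ≤ (j : ℕ)) : (S.1.1 i : ℕ) ≤ (S.1.1 j : ℕ) :=
  S.2.1 i j h

lemma b_le_iff (i : Fin n) (c : ℕ) : bb S c ≤ i.val ↔ c < (S.1.1 i : ℕ) := by
  constructor
  · intro h
    by_contra hc
    push_neg at hc
    have hsub : (Finset.univ.filter fun j : Fin n => (j : ℕ) < i.val + 1) ⊆
        (Finset.univ.filter fun j : Fin n => (S.1.1 j : ℕ) ≤ c) := by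
      intro j hj
      simp only [Finset.mem_filter, Finset.mem_univ, true_and] at hj ⊢
      exact le_trans (mono1 S (by omega)) hc
    have := Finset.card_le_card hsub
    rw [card_filter_lt n (i.val + 1) (by omega)] at this
    unfold bb at h
    omega
  · intro h
    have hsub : (Finset.univ.filter fun j : Fin n => (S.1.1 j : ℕ) ≤ c) ⊆
        (Finset.univ.filter fun j : Fin n => (j : ℕ) < i.val) := by
      intro j hj
      simp only [Finset.mem_filter, Finset.mem_univ, true_and] at hj ⊢
      by_contra hj2
      push_neg at hj2
      exact absurd (le_trans (mono1 S hj2) hj) (by omega)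
    have := Finset.card_le_card hsub
    rw [card_filter_lt n i.val (le_of_lt i.2)] at this
    exact this

lemma b_lt {c : ℕ} (hc : c < n) : bb S c < n := by
  obtain ⟨i, hi⟩ := S.2.2.1.2 ⟨c, hc⟩
  have : c < (S.1.1 i : ℕ) := by
    have := S.2.2.2 i
    rw [hi] at this
    exact this
  exact lt_of_le_of_lt ((b_le_iff S i c).2 this) i.2

lemma card_b_le (i : Fin n) :
    (Finset.univ.filter fun k : Fin n => bb S (k : ℕ) ≤ i.val).card = (S.1.1 i : ℕ) := by
  rw [Finset.filter_congr (fun k _ => by rw [show (bb S (k:ℕ) ≤ i.val) ↔ ((k:ℕ) < (S.1.1 i : ℕ)) from b_le_iff S i k])]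
  exact card_filter_lt n _ (Nat.lt_succ_iff.mp (S.1.1 i).2)

lemma b_mono {c c' : ℕ} (h : c ≤ c') : bb S c ≤ bb S c' := by
  apply Finset.card_le_card
  intro j hj
  simp only [Finset.mem_filter, Finset.mem_univ, true_and] at hj ⊢
  omega

lemma off_lt_dd (k : Fin n) : off S (k : ℕ) < dd S (bb S (k : ℕ)) := by
  apply Finset.card_lt_card
  have hsub : (Finset.univ.filter fun k' : Fin n =>
      bb S (k' : ℕ) = bb S (k : ℕ) ∧ (k' : ℕ) < (k : ℕ)) ⊆
      (Finset.univ.filter fun k' : Fin n => bb S (k' : ℕ) = bb S (k : ℕ)) := by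
    intro j hj
    simp only [Finset.mem_filter, Finset.mem_univ, true_and] at hj ⊢
    exact hj.1
  rw [Finset.ssubset_iff_of_subset hsub]
  exact ⟨k, by simp, by simp⟩

lemma off_mono {k k' : Fin n} (hb : bb S (k : ℕ) = bb S (k' : ℕ)) (hk : (k : ℕ) < (k' : ℕ)) :
    off S (k : ℕ) < off S (k' : ℕ) := by
  apply Finset.card_lt_card
  have hsub : (Finset.univ.filter fun x : Fin n =>
      bb S (x : ℕ) = bb S (k : ℕ) ∧ (x : ℕ) < (k : ℕ)) ⊆
      (Finset.univ.filter fun x : Fin n => bb S (x : ℕ) = bb S (k' : ℕ) ∧ (x : ℕ) < (k' : ℕ)) := by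
    intro x hx
    simp only [Finset.mem_filter, Finset.mem_univ, true_and] at hx ⊢
    exact ⟨hx.1.trans hb, by omega⟩
  rw [Finset.ssubset_iff_of_subset hsub]
  refine ⟨k, ?_, by simp⟩
  simp only [Finset.mem_filter, Finset.mem_univ, true_and]
  exact ⟨hb, hk⟩

lemma dd_two_le {k k' : Fin n} (hb : bb S (k : ℕ) = bb S (k' : ℕ)) (hne : k ≠ k') :
    2 ≤ dd S (bb S (k : ℕ)) := by
  have hsub : ({k, k'} : Finset (Fin n)) ⊆
      (Finset.univ.filter fun x : Fin n => bb S (x : ℕ) = bb S (k : ℕ)) := by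
    intro x hx
    simp only [Finset.mem_insert, Finset.mem_singleton] at hx
    rcases hx with rfl | rfl <;> simp [hb.symm]
  have := Finset.card_le_card hsub
  rwa [Finset.card_pair hne] at this

lemma colHeight_eq (c : Fin n) : colHeight S c = n - bb S (c : ℕ) := by
  unfold colHeight bb
  rw [show (Finset.filter (fun i : Fin n => (c : ℕ) < (S.1.1 i : ℕ)) Finset.univ) =
      Finset.filter (fun i : Fin n => ¬ ((S.1.1 i : ℕ) ≤ (c : ℕ))) Finset.univ from
    Finset.filter_congr (fun i _ => by omega), Finset.filter_not, Finset.card_sdiff_of_subset (Finset.filter_subset _ _), Finset.card_univ,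
    Fintype.card_fin]

lemma blockSize_eq (c : Fin n) : blockSize S c = dd S (bb S (c : ℕ)) := by
  unfold blockSize dd
  congr 1
  apply Finset.filter_congr
  intro c' _
  rw [colHeight_eq, colHeight_eq]
  have h1 := b_lt S c.2
  have h2 := b_lt S c'.2
  constructor <;> intro h <;> omega

lemma dd_le_two (hS : ∀ c : Fin n, blockSize S c ≤ 2) (m : ℕ) : dd S m ≤ 2 := by
  by_cases h : dd S m = 0
  · omega
  · have : ((Finset.univ.filter fun k : Fin n => bb S (k : ℕ) = m)).Nonempty := by
      rw [← Finset.card_pos]; unfold dd at h; omega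
    obtain ⟨k, hk⟩ := this
    simp only [Finset.mem_filter, Finset.mem_univ, true_and] at hk
    calc dd S m = dd S (bb S (k : ℕ)) := by rw [hk]
    _ = blockSize S k := (blockSize_eq S k).symm
    _ ≤ 2 := hS k

lemma bso_eq : bso S = (Finset.filter (fun i : Fin n => dd S i.val = 1) Finset.univ).card := by
  unfold bso
  apply Finset.card_bij (fun (c : Fin n) (_ : c ∈ Finset.filter (fun c : Fin n => blockSize S c = 1) Finset.univ) => (⟨bb S (c : ℕ), b_lt S c.2⟩ : Fin n))
  · intro c hc
    simp only [Finset.mem_filter, Finset.mem_univ, true_and] at hc ⊢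
    rw [← blockSize_eq]; exact hc
  · intro c hc c' hc' h
    simp only [Finset.mem_filter, Finset.mem_univ, true_and, blockSize_eq] at hc hc'
    have hbb : bb S (c : ℕ) = bb S (c' : ℕ) := congrArg Fin.val h
    have hmem : c ∈ (Finset.univ.filter fun x : Fin n => bb S (x : ℕ) = bb S (c : ℕ)) := by simp
    have hmem' : c' ∈ (Finset.univ.filter fun x : Fin n => bb S (x : ℕ) = bb S (c : ℕ)) := by
      simp [hbb.symm]
    have hcard : (Finset.univ.filter fun x : Fin n => bb S (x : ℕ) = bb S (c : ℕ)).card ≤ 1 := by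
      have : dd S (bb S (c : ℕ)) = 1 := hc
      unfold dd at this; omega
    exact Finset.card_le_one.1 hcard c hmem c' hmem'
  · intro i hi
    simp only [Finset.mem_filter, Finset.mem_univ, true_and] at hi
    have : ((Finset.univ.filter fun k : Fin n => bb S (k : ℕ) = i.val)).Nonempty := by
      rw [← Finset.card_pos]; unfold dd at hi; omega
    obtain ⟨c, hc⟩ := this
    simp only [Finset.mem_filter, Finset.mem_univ, true_and] at hc
    refine ⟨c, ?_, ?_⟩
    · simp only [Finset.mem_filter, Finset.mem_univ, true_and, blockSize_eq, hc]
      exact hi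
    · exact Fin.ext hc

lemma col_lb (g : ℕ → Bool) (k : ℕ) : 2 * bb S k ≤ col S g k := by
  unfold col; omega

lemma col_ub (hd : ∀ m, dd S m ≤ 2) (g : ℕ → Bool) {k : ℕ} (hk : k < n) :
    col S g k ≤ 2 * bb S k + 1 := by
  unfold col
  split
  · have := Bool.toNat_le (g (bb S k)); omega
  · have h1 := off_lt_dd S ⟨k, hk⟩
    have h2 := hd (bb S k)
    simp only at h1
    omega

lemma col_lt_2n (hd : ∀ m, dd S m ≤ 2) (g : ℕ → Bool) {k : ℕ} (hk : k < n) :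
    col S g k < 2 * n := by
  have h1 := col_ub S hd g hk
  have h2 := b_lt S hk
  omega

lemma col_strict (hd : ∀ m, dd S m ≤ 2) (g : ℕ → Bool) {k k' : ℕ} (hk : k < n) (hk' : k' < n)
    (h : k < k') : col S g k < col S g k' := by
  have hbm : bb S k ≤ bb S k' := b_mono S (le_of_lt h)
  rcases lt_or_eq_of_le hbm with hb | hb
  · have h1 := col_ub S hd g hk
    have h2 := col_lb S g k'
    omega
  · have h2 : 2 ≤ dd S (bb S k) :=
      dd_two_le S (k := ⟨k, hk⟩) (k' := ⟨k', hk'⟩) hb (by intro hkk; exact absurd (congrArg Fin.val hkk) (by simp; omega))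
    have hoff : off S k < off S k' := off_mono S (k := ⟨k, hk⟩) (k' := ⟨k', hk'⟩) hb h
    unfold col
    rw [if_neg (by omega), if_neg (by rw [← hb]; omega), ← hb]
    omega

lemma col_lt_iff (hd : ∀ m, dd S m ≤ 2) (g : ℕ → Bool) {k k' : ℕ} (hk : k < n) (hk' : k' < n) :
    col S g k < col S g k' ↔ k < k' := by
  constructor
  · intro h
    by_contra hc
    push_neg at hc
    rcases lt_or_eq_of_le hc with h2 | h2
    · have := col_strict S hd g hk' hk h2
      omega
    · subst h2
      omega
  · exact col_strict S hd g hk hk'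

lemma col_lt_even_iff (hd : ∀ m, dd S m ≤ 2) (g : ℕ → Bool) {k : ℕ} (hk : k < n) (i : Fin n) :
    col S g k < 2 * (i.val + 1) ↔ k < (S.1.1 i : ℕ) := by
  rw [← b_le_iff]
  have h1 := col_ub S hd g hk
  have h2 := col_lb S g k
  omega

lemma col_congr {g g' : ℕ → Bool} (hgg : ∀ m, m < n → dd S m = 1 → g m = g' m) {k : ℕ}
    (hk : k < n) : col S g k = col S g' k := by
  unfold col
  by_cases h : dd S (bb S k) = 1
  · rw [if_pos h, if_pos h, hgg (bb S k) (b_lt S hk) h]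
  · rw [if_neg h, if_neg h]

/-- The rook placement associated to a sequence of block choices `g`. -/
def place (hd : ∀ m, dd S m ≤ 2) (g : ℕ → Bool) : RookPlacement n :=
  ⟨fun j => ⟨col S g (S.1.2 j : ℕ), col_lt_2n S hd g (S.1.2 j).2⟩, by
    intro j j' h
    have h2 : col S g (S.1.2 j : ℕ) = col S g (S.1.2 j' : ℕ) := congrArg Fin.val h
    have h3 : (S.1.2 j : ℕ) = (S.1.2 j' : ℕ) := by
      by_contra hc
      rcases Nat.lt_or_ge (S.1.2 j : ℕ) (S.1.2 j' : ℕ) with h4 | h4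
      · exact absurd (col_strict S hd g (S.1.2 j).2 (S.1.2 j').2 h4) (by omega)
      · rcases Nat.lt_or_ge (S.1.2 j' : ℕ) (S.1.2 j : ℕ) with h5 | h5
        · exact absurd (col_strict S hd g (S.1.2 j').2 (S.1.2 j).2 h5) (by omega)
        · omega
    exact S.2.2.1.1 (Fin.ext h3), by
    intro i
    simp only
    rw [col_lt_even_iff S hd g (S.1.2 i).2 i]
    exact S.2.2.2 i⟩

lemma occ_place (hd : ∀ m, dd S m ≤ 2) (g : ℕ → Bool) (c : ℕ) :
    Occupied (place S hd g) c ↔ ∃ k : Fin n, col S g (k : ℕ) = c := by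
  constructor
  · rintro ⟨j, hj⟩
    exact ⟨S.1.2 j, hj⟩
  · rintro ⟨k, hk⟩
    obtain ⟨j, hj⟩ := S.2.2.1.2 k
    exact ⟨j, by simp only [place, hj, hk]⟩

lemma card_occ (hd : ∀ m, dd S m ≤ 2) (g : ℕ → Bool) (m : ℕ) :
    (Finset.univ.filter fun c : Fin (2 * n) =>
        Occupied (place S hd g) (c : ℕ) ∧ (c : ℕ) < m).card =
      (Finset.univ.filter fun k : Fin n => col S g (k : ℕ) < m).card := by
  symm
  apply Finset.card_bij (fun (k : Fin n)
    (_ : k ∈ Finset.univ.filter fun k : Fin n => col S g (k : ℕ) < m) =>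
      (⟨col S g (k : ℕ), col_lt_2n S hd g k.2⟩ : Fin (2 * n)))
  · intro k hk
    simp only [Finset.mem_filter, Finset.mem_univ, true_and] at hk ⊢
    exact ⟨(occ_place S hd g _).2 ⟨k, rfl⟩, hk⟩
  · intro k hk k' hk' h
    have h2 : col S g (k : ℕ) = col S g (k' : ℕ) := congrArg Fin.val h
    have : (k : ℕ) = (k' : ℕ) := by
      by_contra hc
      rcases Nat.lt_or_ge (k : ℕ) (k' : ℕ) with h4 | h4
      · exact absurd (col_strict S hd g k.2 k'.2 h4) (by omega)
      · rcases Nat.lt_or_ge (k' : ℕ) (k : ℕ) with h5 | h5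
        · exact absurd (col_strict S hd g k'.2 k.2 h5) (by omega)
        · omega
    exact Fin.ext this
  · intro c hc
    simp only [Finset.mem_filter, Finset.mem_univ, true_and] at hc
    obtain ⟨k, hk⟩ := (occ_place S hd g (c : ℕ)).1 hc.1
    refine ⟨k, ?_, Fin.ext hk⟩
    simp only [Finset.mem_filter, Finset.mem_univ, true_and]
    omega

lemma proj_place (hd : ∀ m, dd S m ≤ 2) (g : ℕ → Bool) : Projects (place S hd g) S := by
  constructor
  · intro i
    rw [card_occ S hd g]
    rw [Finset.filter_congr (fun (k : Fin n) _ => by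
      rw [show (col S g (k : ℕ) < 2 * (i.val + 1)) ↔ ((k : ℕ) < (S.1.1 i : ℕ)) from
        col_lt_even_iff S hd g k.2 i])]
    rw [card_filter_lt n _ (Nat.lt_succ_iff.mp (S.1.1 i).2)]
  · intro i
    have : ((place S hd g).1 i : ℕ) = col S g (S.1.2 i : ℕ) := rfl
    rw [this, card_occ S hd g]
    rw [Finset.filter_congr (fun (k : Fin n) _ => by
      rw [show (col S g (k : ℕ) < col S g (S.1.2 i : ℕ)) ↔ ((k : ℕ) < (S.1.2 i : ℕ)) from
        col_lt_iff S hd g k.2 (S.1.2 i).2])]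
    rw [card_filter_lt n _ (le_of_lt (S.1.2 i).2)]

lemma occ_lt_2n (R : RookPlacement n) {c : ℕ} (h : Occupied R c) : c < 2 * n := by
  obtain ⟨j, hj⟩ := h
  rw [← hj]
  exact (R.1 j).2

/-- The number of occupied columns among the first `m` columns. -/
noncomputable def cnt (R : RookPlacement n) (m : ℕ) : ℕ :=
  (Finset.univ.filter fun c : Fin (2 * n) => Occupied R (c : ℕ) ∧ (c : ℕ) < m).card

/-- The number of occupied columns in block `m` (columns `2m`, `2m+1`). -/
noncomputable def obc (R : RookPlacement n) (m : ℕ) : ℕ :=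
  (Finset.univ.filter fun c : Fin (2 * n) =>
    Occupied R (c : ℕ) ∧ 2 * m ≤ (c : ℕ) ∧ (c : ℕ) < 2 * (m + 1)).card

lemma cnt_split (R : RookPlacement n) (m : ℕ) :
    cnt R (2 * (m + 1)) = cnt R (2 * m) + obc R m := by
  unfold cnt obc
  rw [← Finset.card_union_of_disjoint]
  · congr 1
    rw [← Finset.filter_or]
    apply Finset.filter_congr
    intro c _
    constructor
    · rintro ⟨h1, h2⟩
      by_cases h3 : (c : ℕ) < 2 * m
      · exact Or.inl ⟨h1, h3⟩
      · exact Or.inr ⟨h1, by omega, h2⟩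
    · rintro (⟨h1, h2⟩ | ⟨h1, h2, h3⟩) <;> exact ⟨h1, by omega⟩
  · rw [Finset.disjoint_filter]
    intro c _ hc
    obtain ⟨-, h1⟩ := hc
    rintro ⟨-, h2, -⟩
    omega

lemma cnt_even_congr {R R' : RookPlacement n} (hR : Projects R S) (hR' : Projects R' S)
    {m : ℕ} (hm : m ≤ n) : cnt R (2 * m) = cnt R' (2 * m) := by
  rcases m with _ | mm
  · have h0 : ∀ T : RookPlacement n, cnt T (2 * 0) = 0 := by
      intro T
      unfold cnt
      rw [Finset.card_eq_zero, Finset.filter_eq_empty_iff]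
      intro c _
      simp only [not_and]
      intro _
      omega
    rw [h0, h0]
  · have hi : mm < n := by omega
    exact ((hR.1 ⟨mm, hi⟩).symm).trans (hR'.1 ⟨mm, hi⟩)

lemma obc_congr {R R' : RookPlacement n} (hR : Projects R S) (hR' : Projects R' S)
    {m : ℕ} (hm : m < n) : obc R m = obc R' m := by
  have h1 := cnt_split R m
  have h2 := cnt_split R' m
  have h3 := cnt_even_congr S hR hR' (le_of_lt hm)
  have h4 := cnt_even_congr S hR hR' (m := m + 1) (by omega)
  omega

lemma pair_card (R : RookPlacement n) {m : ℕ} (hm : m < n) :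
    obc R m = (if Occupied R (2 * m) then 1 else 0) +
      (if Occupied R (2 * m + 1) then 1 else 0) := by
  unfold obc
  have hset : (Finset.univ.filter fun c : Fin (2 * n) =>
      Occupied R (c : ℕ) ∧ 2 * m ≤ (c : ℕ) ∧ (c : ℕ) < 2 * (m + 1)) =
      Finset.filter (fun c : Fin (2 * n) => Occupied R (c : ℕ))
        ({⟨2 * m, by omega⟩, ⟨2 * m + 1, by omega⟩} : Finset (Fin (2 * n))) := by
    ext c
    simp only [Finset.mem_filter, Finset.mem_univ, true_and, Finset.mem_insert,
      Finset.mem_singleton, Fin.ext_iff]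
    constructor
    · rintro ⟨h1, h2, h3⟩
      exact ⟨by omega, h1⟩
    · rintro ⟨h1 | h1, h2⟩ <;> exact ⟨h2, by omega⟩
  rw [hset, Finset.filter_insert, Finset.filter_singleton]
  by_cases h1 : Occupied R (2 * m) <;> by_cases h2 : Occupied R (2 * m + 1) <;>
    simp only [h1, h2, if_true, if_false, ite_true, ite_false]
  · rw [Finset.card_insert_of_notMem (by simp [Fin.ext_iff])]
    simp
  · simp
  · simp
  · simp

lemma card_occ_gen (hd : ∀ m, dd S m ≤ 2) (g : ℕ → Bool) (P : ℕ → Prop) :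
    (Finset.univ.filter fun c : Fin (2 * n) =>
        Occupied (place S hd g) (c : ℕ) ∧ P (c : ℕ)).card =
      (Finset.univ.filter fun k : Fin n => P (col S g (k : ℕ))).card := by
  symm
  apply Finset.card_bij (fun (k : Fin n)
    (_ : k ∈ Finset.univ.filter fun k : Fin n => P (col S g (k : ℕ))) =>
      (⟨col S g (k : ℕ), col_lt_2n S hd g k.2⟩ : Fin (2 * n)))
  · intro k hk
    simp only [Finset.mem_filter, Finset.mem_univ, true_and] at hk ⊢
    exact ⟨(occ_place S hd g _).2 ⟨k, rfl⟩, hk⟩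
  · intro k hk k' hk' h
    have h2 : col S g (k : ℕ) = col S g (k' : ℕ) := congrArg Fin.val h
    have : (k : ℕ) = (k' : ℕ) := by
      by_contra hc
      rcases Nat.lt_or_ge (k : ℕ) (k' : ℕ) with h4 | h4
      · exact absurd (col_strict S hd g k.2 k'.2 h4) (by omega)
      · rcases Nat.lt_or_ge (k' : ℕ) (k : ℕ) with h5 | h5
        · exact absurd (col_strict S hd g k'.2 k.2 h5) (by omega)
        · omega
    exact Fin.ext this
  · intro c hc
    simp only [Finset.mem_filter, Finset.mem_univ, true_and] at hc
    obtain ⟨k, hk⟩ := (occ_place S hd g (c : ℕ)).1 hc.1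
    refine ⟨k, ?_, Fin.ext hk⟩
    simp only [Finset.mem_filter, Finset.mem_univ, true_and]
    rw [hk]
    exact hc.2

lemma obc_place (hd : ∀ m, dd S m ≤ 2) (g : ℕ → Bool) {m : ℕ} (hm : m < n) :
    obc (place S hd g) m = dd S m := by
  have hgen : obc (place S hd g) m =
      (Finset.univ.filter fun k : Fin n =>
        2 * m ≤ col S g (k : ℕ) ∧ col S g (k : ℕ) < 2 * (m + 1)).card := by
    unfold obc
    have hgen0 := card_occ_gen S hd g (fun c => 2 * m ≤ c ∧ c < 2 * (m + 1))
    convert hgen0 using 2 <;> congr!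
  rw [hgen]
  unfold dd
  apply congrArg
  apply Finset.filter_congr
  intro k _
  have h1 := col_lb S g (k : ℕ)
  have h2 := col_ub S hd g k.2
  constructor <;> intro h <;> omega

/-- Two placements projecting to `S` with the same occupied columns are equal. -/
lemma eq_of_occ_eq {R R' : RookPlacement n} (hR : Projects R S) (hR' : Projects R' S)
    (hocc : ∀ c : ℕ, Occupied R c ↔ Occupied R' c) : R = R' := by
  have rank_strict : ∀ x y : Fin (2 * n), Occupied R (x : ℕ) → (x : ℕ) < (y : ℕ) →
      cnt R (x : ℕ) < cnt R (y : ℕ) := by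
    intro x y hx hxy
    apply Finset.card_lt_card
    have hsub : (Finset.univ.filter fun c : Fin (2 * n) =>
        Occupied R (c : ℕ) ∧ (c : ℕ) < (x : ℕ)) ⊆
        (Finset.univ.filter fun c : Fin (2 * n) => Occupied R (c : ℕ) ∧ (c : ℕ) < (y : ℕ)) := by
      intro z hz
      simp only [Finset.mem_filter, Finset.mem_univ, true_and] at hz ⊢
      exact ⟨hz.1, by omega⟩
    rw [Finset.ssubset_iff_of_subset hsub]
    refine ⟨x, ?_, ?_⟩ <;> simp only [Finset.mem_filter, Finset.mem_univ, true_and]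
    · exact ⟨hx, hxy⟩
    · intro hcon
      omega
  apply Subtype.ext
  funext j
  have e1 : (S.1.2 j : ℕ) = cnt R ((R.1 j : ℕ)) := hR.2 j
  have e2 : (S.1.2 j : ℕ) = cnt R ((R'.1 j : ℕ)) := by
    rw [hR'.2 j]
    unfold cnt
    congr 1
    apply Finset.filter_congr
    intro c _
    rw [hocc (c : ℕ)]
  have hoR : Occupied R ((R.1 j : ℕ)) := ⟨j, rfl⟩
  have hoR' : Occupied R ((R'.1 j : ℕ)) := (hocc _).2 ⟨j, rfl⟩
  apply Fin.ext
  by_contra hc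
  rcases Nat.lt_or_ge ((R.1 j : ℕ)) ((R'.1 j : ℕ)) with h4 | h4
  · have := rank_strict _ _ hoR h4
    omega
  · rcases Nat.lt_or_ge ((R'.1 j : ℕ)) ((R.1 j : ℕ)) with h5 | h5
    · have := rank_strict _ _ hoR' h5
      omega
    · omega

lemma fiber_nonempty {m : ℕ} (h : dd S m ≠ 0) : ∃ k : Fin n, bb S (k : ℕ) = m := by
  have : ((Finset.univ.filter fun k : Fin n => bb S (k : ℕ) = m)).Nonempty := by
    rw [← Finset.card_pos]; unfold dd at h; omega
  obtain ⟨k, hk⟩ := this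
  simp only [Finset.mem_filter, Finset.mem_univ, true_and] at hk
  exact ⟨k, hk⟩

lemma dd_pos_of_mem {k : Fin n} {m : ℕ} (h : bb S (k : ℕ) = m) : 1 ≤ dd S m := by
  unfold dd
  apply Finset.card_pos.2
  exact ⟨k, by simp [h]⟩

lemma occ_of_obc_two {R : RookPlacement n} {m : ℕ} (hm : m < n) (h : obc R m = 2) :
    Occupied R (2 * m) ∧ Occupied R (2 * m + 1) := by
  have pc := pair_card R hm
  by_cases h1 : Occupied R (2 * m) <;> by_cases h2 : Occupied R (2 * m + 1) <;>
    simp only [h1, h2, if_true, if_false] at pc <;> first | exact ⟨h1, h2⟩ | omega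

lemma occ_place_odd (hd : ∀ m, dd S m ≤ 2) {R : RookPlacement n} (hR : Projects R S)
    {m : ℕ} (hm : m < n) :
    Occupied (place S hd (fun m' => decide (Occupied R (2 * m' + 1)))) (2 * m + 1) ↔
      Occupied R (2 * m + 1) := by
  set g0 : ℕ → Bool := fun m' => decide (Occupied R (2 * m' + 1)) with hg0
  have hR' : Projects (place S hd g0) S := proj_place S hd g0
  have hobc : obc R m = obc (place S hd g0) m := obc_congr S hR hR' hm
  have hdm : obc (place S hd g0) m = dd S m := obc_place S hd g0 hm
  have hocc' : Occupied (place S hd g0) (2 * m + 1) ↔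
      ∃ k : Fin n, col S g0 (k : ℕ) = 2 * m + 1 := occ_place S hd g0 _
  have hcases : dd S m = 0 ∨ dd S m = 1 ∨ dd S m = 2 := by have := hd m; omega
  rcases hcases with hdd | hdd | hdd
  · constructor
    · intro h
      obtain ⟨k, hk⟩ := hocc'.1 h
      have h1 := col_lb S g0 (k : ℕ)
      have h2 := col_ub S hd g0 k.2
      have hbk : bb S (k : ℕ) = m := by omega
      have := dd_pos_of_mem S hbk
      omega
    · intro h
      exfalso
      have pc := pair_card R hm
      rw [if_pos h] at pc
      by_cases h1 : Occupied R (2 * m) <;> simp only [h1, if_true, if_false] at pc <;> omega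
  · obtain ⟨k0, hk0⟩ := fiber_nonempty S (m := m) (by omega)
    have hcol0 : col S g0 (k0 : ℕ) = 2 * m + (g0 m).toNat := by
      unfold col
      rw [hk0, if_pos hdd]
    constructor
    · intro h
      obtain ⟨k, hk⟩ := hocc'.1 h
      have h1 := col_lb S g0 (k : ℕ)
      have h2 := col_ub S hd g0 k.2
      have hbk : bb S (k : ℕ) = m := by omega
      have hcolk : col S g0 (k : ℕ) = 2 * m + (g0 m).toNat := by
        unfold col
        rw [hbk, if_pos hdd]
      rw [hcolk] at hk
      have : g0 m = true := by
        cases hb : g0 m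
        · rw [hb] at hk
          simp at hk
        · rfl
      exact of_decide_eq_true this
    · intro h
      have hg : g0 m = true := decide_eq_true h
      apply hocc'.2
      exact ⟨k0, by rw [hcol0, hg]; rfl⟩
  · have hA := occ_of_obc_two hm (show obc R m = 2 by omega)
    have hB := occ_of_obc_two (R := place S hd g0) hm (show obc (place S hd g0) m = 2 by omega)
    exact ⟨fun _ => hA.2, fun _ => hB.2⟩

lemma occ_place_even (hd : ∀ m, dd S m ≤ 2) {R : RookPlacement n} (hR : Projects R S)
    {m : ℕ} (hm : m < n) :
    Occupied (place S hd (fun m' => decide (Occupied R (2 * m' + 1)))) (2 * m) ↔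
      Occupied R (2 * m) := by
  set g0 : ℕ → Bool := fun m' => decide (Occupied R (2 * m' + 1)) with hg0
  have hR' : Projects (place S hd g0) S := proj_place S hd g0
  have hobc : obc R m = obc (place S hd g0) m := obc_congr S hR hR' hm
  have hodd := occ_place_odd S hd hR hm
  have pc := pair_card R hm
  have pc' := pair_card (place S hd g0) hm
  have h34 : (if Occupied R (2 * m + 1) then 1 else 0) =
      (if Occupied (place S hd g0) (2 * m + 1) then 1 else 0) := by
    by_cases h3 : Occupied R (2 * m + 1)
    · rw [if_pos h3, if_pos (hodd.2 h3)]
    · rw [if_neg h3, if_neg (fun hcon => h3 (hodd.1 hcon))]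
  by_cases h1 : Occupied R (2 * m)
  · rw [if_pos h1] at pc
    by_cases h2 : Occupied (place S hd g0) (2 * m)
    · exact iff_of_true h2 h1
    · rw [if_neg h2] at pc'
      omega
  · rw [if_neg h1] at pc
    by_cases h2 : Occupied (place S hd g0) (2 * m)
    · rw [if_pos h2] at pc'
      omega
    · exact iff_of_false h2 h1

/-- The extension of a choice function on the size-one blocks. -/
noncomputable def gext (f : {i : Fin n // dd S i.val = 1} → Bool) : ℕ → Bool :=
  fun m => if h : m < n ∧ dd S m = 1 then f ⟨⟨m, h.1⟩, h.2⟩ else false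

lemma gext_eq (f : {i : Fin n // dd S i.val = 1} → Bool) (i : Fin n) (hi : dd S i.val = 1) :
    gext S f i.val = f ⟨i, hi⟩ := by
  unfold gext
  rw [dif_pos ⟨i.2, hi⟩]

lemma fiber_bij (hd : ∀ m, dd S m ≤ 2) :
    Function.Bijective (fun f : ({i : Fin n // dd S i.val = 1} → Bool) =>
      (⟨place S hd (gext S f), proj_place S hd (gext S f)⟩ :
        {R : RookPlacement n // Projects R S})) := by
  constructor
  · intro f f' h
    funext x
    obtain ⟨i, hi⟩ := x
    have h' : place S hd (gext S f) = place S hd (gext S f') := congrArg Subtype.val h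
    obtain ⟨k0, hk0⟩ := fiber_nonempty S (m := i.val) (by omega)
    obtain ⟨j, hj⟩ := S.2.2.1.2 k0
    have hcols : col S (gext S f) ((S.1.2 j : ℕ)) = col S (gext S f') ((S.1.2 j : ℕ)) := by
      have h2 := congrFun (congrArg Subtype.val h') j
      exact congrArg Fin.val h2
    rw [hj] at hcols
    unfold col at hcols
    rw [hk0, if_pos hi, if_pos hi, gext_eq S f i hi, gext_eq S f' i hi] at hcols
    cases hb : f ⟨i, hi⟩ <;> cases hb' : f' ⟨i, hi⟩ <;>
      rw [hb, hb'] at hcols <;> simp at hcols <;> first | rfl | omega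
  · rintro ⟨R, hR⟩
    refine ⟨fun x => decide (Occupied R (2 * x.1.val + 1)), Subtype.ext ?_⟩
    show place S hd _ = R
    have hstep1 : place S hd (gext S (fun x => decide (Occupied R (2 * x.1.val + 1)))) =
        place S hd (fun m' => decide (Occupied R (2 * m' + 1))) := by
      apply Subtype.ext
      funext j
      apply Fin.ext
      show col S (gext S (fun x => decide (Occupied R (2 * x.1.val + 1)))) ((S.1.2 j : ℕ)) =
        col S (fun m' => decide (Occupied R (2 * m' + 1))) ((S.1.2 j : ℕ))
      apply col_congr S _ (S.1.2 j).2
      intro m hm h1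
      unfold gext
      rw [dif_pos ⟨hm, h1⟩]
    rw [hstep1]
    apply eq_of_occ_eq S (proj_place S hd _) hR
    intro c
    by_cases hc : c < 2 * n
    · have hm : c / 2 < n := by omega
      have hpar : c = 2 * (c / 2) ∨ c = 2 * (c / 2) + 1 := by omega
      rcases hpar with hp | hp
      · rw [hp]
        exact occ_place_even S hd hR hm
      · rw [hp]
        exact occ_place_odd S hd hR hm
    · constructor <;> intro h <;> exact absurd (occ_lt_2n _ h) hc

end FiberProof

open FiberProof

/-- For every full rook placement `S` on a Young diagram with `n` rows all of
whose blocks have size at most `2`, the fiber of the empty-column-deletion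
projection `Π_n` over `S` has cardinality `2^{bso S}`. -/
theorem fiber_of_projection_card (n : ℕ) (S : FullPlacement n)
    (hS : ∀ c : Fin n, blockSize S c ≤ 2) :
    Nat.card {R : RookPlacement n // Projects R S} = 2 ^ bso S := by
  have hd : ∀ m, dd S m ≤ 2 := dd_le_two S hS
  have hcard := Nat.card_eq_of_bijective _ (fiber_bij S hd)
  rw [← hcard, Nat.card_eq_fintype_card, Fintype.card_fun, Fintype.card_bool,
    Fintype.card_subtype, bso_eq S]
end

section
/- For every full rook placement S on a Young diagram with n rows all of whose blocks have size at most 2, there is a unique left-aligned rook placement R on the double staircase 2δ_n with Π_n(R) = S. -/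
attribute [local instance] Classical.propDecidable

namespace ULAProof

variable {n : ℕ}

open Finset

/-- `a S k` is the length of row `k-1` of `S` (with `a S 0 = 0` and
`a S k = n` for `k > n`). -/
def a (S : FullPlacement n) (k : ℕ) : ℕ :=
  if h : 1 ≤ k ∧ k ≤ n then (S.1.1 ⟨k - 1, by omega⟩ : ℕ) else if k = 0 then 0 else n

lemma a_zero (S : FullPlacement n) : a S 0 = 0 := by simp [a]

lemma a_le_n (S : FullPlacement n) (k : ℕ) : a S k ≤ n := by
  unfold a
  split
  · exact Nat.lt_succ_iff.mp (S.1.1 _).isLt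
  · split <;> omega

lemma a_succ_fin (S : FullPlacement n) (i : Fin n) : a S (i.val + 1) = (S.1.1 i : ℕ) := by
  unfold a
  rw [dif_pos ⟨by omega, by omega⟩]
  exact congrArg (fun x => (S.1.1 x : ℕ))
    (Fin.ext (by simp) : (⟨i.val + 1 - 1, by omega⟩ : Fin n) = i)

lemma a_n (S : FullPlacement n) : a S n = n := by
  rcases Nat.eq_zero_or_pos n with h | h
  · subst h; simp [a]
  · have hlast : a S n = (S.1.1 ⟨n - 1, by omega⟩ : ℕ) := by
      unfold a; rw [dif_pos ⟨h, le_refl n⟩]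
    obtain ⟨i, hi⟩ := S.2.2.1.2 ⟨n - 1, by omega⟩
    have h1 : (S.1.2 i : ℕ) < (S.1.1 i : ℕ) := S.2.2.2 i
    have h2 : (S.1.1 i : ℕ) ≤ (S.1.1 ⟨n - 1, by omega⟩ : ℕ) :=
      S.2.1 i ⟨n - 1, by omega⟩ (by rw [Fin.le_def]; simp; omega)
    have h3 : (S.1.2 i : ℕ) = n - 1 := by rw [hi]
    have h4 := a_le_n S n
    omega

lemma a_le_succ (S : FullPlacement n) (k : ℕ) : a S k ≤ a S (k + 1) := by
  unfold a
  split
  · rename_i h1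
    split
    · rename_i h2
      refine S.2.1 ⟨k - 1, by omega⟩ ⟨k + 1 - 1, by omega⟩ ?_
      rw [Fin.le_def]
      show k - 1 ≤ k + 1 - 1
      omega
    · rename_i h2
      have := Nat.lt_succ_iff.mp (S.1.1 (⟨k - 1, by omega⟩ : Fin n)).isLt
      split <;> omega
  · rename_i h1
    split
    · rename_i h2
      split
      · exact Nat.zero_le _
      · omega
    · rename_i h2
      rw [dif_neg (by omega), if_neg (by omega)]

lemma a_mono (S : FullPlacement n) : Monotone (a S) :=
  monotone_nat_of_le_succ (a_le_succ S)

lemma a_ge_n (S : FullPlacement n) {k : ℕ} (h : n ≤ k) : a S k = n := by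
  have h1 := a_mono S h
  rw [a_n S] at h1
  have h2 := a_le_n S k
  omega

lemma a_step (S : FullPlacement n) (hS : ∀ c : Fin n, blockSize S c ≤ 2) (k : ℕ) :
    a S (k + 1) ≤ a S k + 2 := by
  by_contra hcon
  push_neg at hcon
  have hkn : k + 1 ≤ n := by
    by_contra h
    rw [a_ge_n S (by omega : n ≤ k + 1), a_ge_n S (by omega : n ≤ k)] at hcon
    omega
  have hk : k < n := by omega
  have han1 := a_le_n S (k + 1)
  set m := a S k with hm
  -- all columns in [a S k, a S (k+1)) have the same column height
  have hfil : ∀ c : Fin n, m ≤ c.val → c.val < a S (k + 1) →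
      (Finset.univ.filter (fun i : Fin n => (c : ℕ) < (S.1.1 i : ℕ)))
        = Finset.univ.filter (fun i : Fin n => k ≤ i.val) := by
    intro c hc1 hc2
    ext i
    simp only [mem_filter, mem_univ, true_and]
    constructor
    · intro h
      by_contra hik
      push_neg at hik
      have hk1 : 1 ≤ k := by omega
      have : (S.1.1 i : ℕ) ≤ a S k := by
        rw [show a S k = a S ((k - 1) + 1) by congr 1; omega, a_succ_fin S ⟨k - 1, by omega⟩]
        exact S.2.1 i ⟨k - 1, by omega⟩ (by rw [Fin.le_def]; simp; omega)
      omega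
    · intro h
      have : a S (k + 1) ≤ (S.1.1 i : ℕ) := by
        rw [show (k:ℕ) + 1 = (⟨k, hk⟩ : Fin n).val + 1 from rfl, a_succ_fin S ⟨k, hk⟩]
        exact S.2.1 ⟨k, hk⟩ i (by rw [Fin.le_def]; simpa)
      omega
  have hch : ∀ c : Fin n, m ≤ c.val → c.val < a S (k + 1) →
      colHeight S c = colHeight S ⟨m, by omega⟩ := by
    intro c hc1 hc2
    unfold colHeight
    rw [hfil c hc1 hc2, hfil ⟨m, by omega⟩ (by simp) (by simp; omega)]
  have hsub : ({⟨m, by omega⟩, ⟨m + 1, by omega⟩, ⟨m + 2, by omega⟩} : Finset (Fin n)) ⊆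
      Finset.univ.filter (fun c' : Fin n => colHeight S c' = colHeight S ⟨m, by omega⟩) := by
    intro x hx
    simp only [mem_insert, mem_singleton] at hx
    simp only [mem_filter, mem_univ, true_and]
    rcases hx with h | h | h <;> subst h
    · exact hch _ (show m ≤ m by omega) (show m < a S (k + 1) by omega)
    · exact hch _ (show m ≤ m + 1 by omega) (show m + 1 < a S (k + 1) by omega)
    · exact hch _ (show m ≤ m + 2 by omega) (show m + 2 < a S (k + 1) by omega)
  have hcard : ({⟨m, by omega⟩, ⟨m + 1, by omega⟩, ⟨m + 2, by omega⟩} : Finset (Fin n)).card = 3 := by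
    rw [Finset.card_insert_of_notMem (by simp [Fin.ext_iff]),
        Finset.card_insert_of_notMem (by simp [Fin.ext_iff]), Finset.card_singleton]
  have := Finset.card_le_card hsub
  have hbs := hS ⟨m, by omega⟩
  unfold blockSize at hbs
  omega

/-- The set of occupied columns of the canonical left-aligned placement. -/
def inT (S : FullPlacement n) (c : ℕ) : Prop :=
  a S (c / 2) + c % 2 < a S (c / 2 + 1)

/-- Rank of column `c`: number of occupied columns strictly to its left. -/
noncomputable def rk (S : FullPlacement n) (c : ℕ) : ℕ :=
  ((Finset.range c).filter (fun c' => inT S c')).card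

lemma cnt_succ (P : ℕ → Prop) (m : ℕ) :
    ((Finset.range (m + 1)).filter P).card
      = ((Finset.range m).filter P).card + (if P m then 1 else 0) := by
  rw [Finset.range_add_one, Finset.filter_insert]
  split
  · rw [Finset.card_insert_of_notMem (by simp)]
  · simp

lemma inT_two_mul (S : FullPlacement n) (k : ℕ) :
    inT S (2 * k) ↔ a S k < a S (k + 1) := by
  unfold inT
  rw [show 2 * k / 2 = k by omega, show 2 * k % 2 = 0 by omega]
  omega

lemma inT_two_mul_add_one (S : FullPlacement n) (k : ℕ) :
    inT S (2 * k + 1) ↔ a S k + 1 < a S (k + 1) := by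
  unfold inT
  rw [show (2 * k + 1) / 2 = k by omega, show (2 * k + 1) % 2 = 1 by omega]

lemma rk_two_mul (S : FullPlacement n) (hS : ∀ c : Fin n, blockSize S c ≤ 2) (m : ℕ) :
    rk S (2 * m) = a S m := by
  induction m with
  | zero => simp [rk, a_zero]
  | succ m ih =>
    have h1 : rk S (2 * (m + 1)) = rk S (2 * m) + (if inT S (2 * m) then 1 else 0)
        + (if inT S (2 * m + 1) then 1 else 0) := by
      unfold rk
      rw [show 2 * (m + 1) = (2 * m + 1) + 1 by ring, cnt_succ, cnt_succ]
    have h2 := a_le_succ S m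
    have h3 := a_step S hS m
    have h4 := inT_two_mul S m
    have h5 := inT_two_mul_add_one S m
    by_cases hA : inT S (2 * m) <;> by_cases hB : inT S (2 * m + 1) <;>
      simp only [hA, hB, if_true, if_false, if_pos, if_neg, not_false_iff] at h1 <;>
      rw [h4] at hA <;> rw [h5] at hB <;> simp [h1, ih] <;> omega

lemma rk_mono (S : FullPlacement n) {c d : ℕ} (h : c ≤ d) : rk S c ≤ rk S d :=
  Finset.card_le_card (Finset.filter_subset_filter _ (Finset.range_subset_range.mpr h))

lemma rk_succ_of_inT (S : FullPlacement n) {c : ℕ} (h : inT S c) :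
    rk S (c + 1) = rk S c + 1 := by
  unfold rk; rw [cnt_succ, if_pos h]

lemma rk_injOn (S : FullPlacement n) {c d : ℕ} (hc : inT S c) (hd : inT S d)
    (h : rk S c = rk S d) : c = d := by
  rcases lt_trichotomy c d with hlt | he | hlt
  · have h1 := rk_succ_of_inT S hc
    have h2 := rk_mono S (show c + 1 ≤ d by omega)
    omega
  · exact he
  · have h1 := rk_succ_of_inT S hd
    have h2 := rk_mono S (show d + 1 ≤ c by omega)
    omega

/-- The block of the `j`-th occupied column. -/
noncomputable def kk (S : FullPlacement n) (j : ℕ) : ℕ := sInf {k | j < a S (k + 1)}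

/-- Column of the occupied column of rank `j`. -/
noncomputable def g (S : FullPlacement n) (j : ℕ) : ℕ := 2 * kk S j + (j - a S (kk S j))

lemma kk_le (S : FullPlacement n) {j m : ℕ} (h : j < a S (m + 1)) : kk S j ≤ m :=
  Nat.sInf_le h

lemma kk_spec (S : FullPlacement n) {j : ℕ} (hj : j < n) : j < a S (kk S j + 1) := by
  have hne : (n - 1) ∈ {k | j < a S (k + 1)} := by
    simp only [Set.mem_setOf_eq]
    rw [show n - 1 + 1 = n by omega, a_n S]
    omega
  exact Nat.sInf_mem ⟨_, hne⟩

lemma kk_low (S : FullPlacement n) {j : ℕ} (hj : j < n) : a S (kk S j) ≤ j := by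
  by_contra h
  push_neg at h
  have hk0 : kk S j ≠ 0 := by
    intro h0; rw [h0, a_zero] at h; omega
  have : kk S j ≤ kk S j - 1 :=
    kk_le S (by rw [show kk S j - 1 + 1 = kk S j by omega]; exact h)
  omega

lemma kk_lt (S : FullPlacement n) {j : ℕ} (hj : j < n) : kk S j < n := by
  have h1 : kk S j ≤ n - 1 := kk_le S (by rw [show n - 1 + 1 = n by omega, a_n S]; omega)
  omega

lemma g_sub_le (S : FullPlacement n) (hS : ∀ c : Fin n, blockSize S c ≤ 2) {j : ℕ}
    (hj : j < n) : j - a S (kk S j) ≤ 1 := by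
  have h1 := kk_spec S hj
  have h2 := kk_low S hj
  have h3 := a_step S hS (kk S j)
  omega

lemma g_lt (S : FullPlacement n) (hS : ∀ c : Fin n, blockSize S c ≤ 2) {j : ℕ}
    (hj : j < n) : g S j < 2 * n := by
  have h1 := kk_lt S hj
  have h2 := g_sub_le S hS hj
  unfold g; omega

lemma inT_g (S : FullPlacement n) (hS : ∀ c : Fin n, blockSize S c ≤ 2) {j : ℕ}
    (hj : j < n) : inT S (g S j) := by
  have h1 := kk_spec S hj
  have h2 := kk_low S hj
  have h3 := g_sub_le S hS hj
  unfold inT g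
  rw [show (2 * kk S j + (j - a S (kk S j))) / 2 = kk S j by omega,
      show (2 * kk S j + (j - a S (kk S j))) % 2 = j - a S (kk S j) by omega]
  omega

lemma rk_g (S : FullPlacement n) (hS : ∀ c : Fin n, blockSize S c ≤ 2) {j : ℕ}
    (hj : j < n) : rk S (g S j) = j := by
  have h1 := kk_spec S hj
  have h2 := kk_low S hj
  have h3 := g_sub_le S hS hj
  have hbase := rk_two_mul S hS (kk S j)
  rcases (show j - a S (kk S j) = 0 ∨ j - a S (kk S j) = 1 by omega) with he | he
  · unfold g
    rw [he, Nat.add_zero, hbase]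
    omega
  · have h0 : inT S (2 * kk S j) := (inT_two_mul S _).mpr (by omega)
    unfold g
    rw [he, rk_succ_of_inT S h0, hbase]
    omega

lemma rk_eq (S : FullPlacement n) (hS : ∀ c : Fin n, blockSize S c ≤ 2) {c : ℕ}
    (hc : inT S c) : rk S c = a S (c / 2) + c % 2 := by
  have hb := rk_two_mul S hS (c / 2)
  rcases (show c = 2 * (c / 2) ∨ c = 2 * (c / 2) + 1 by omega) with he | he
  · rw [show c % 2 = 0 by omega]
    conv_lhs => rw [he]
    rw [hb]
    omega
  · rw [show c % 2 = 1 by omega]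
    have h0 : inT S (2 * (c / 2)) := by
      rw [inT_two_mul]
      unfold inT at hc
      omega
    conv_lhs => rw [he]
    rw [rk_succ_of_inT S h0, hb]

lemma rk_lt (S : FullPlacement n) (hS : ∀ c : Fin n, blockSize S c ≤ 2) {c : ℕ}
    (hc : inT S c) : rk S c < n := by
  rw [rk_eq S hS hc]
  have h1 := a_le_n S (c / 2 + 1)
  unfold inT at hc
  omega

lemma g_rk (S : FullPlacement n) (hS : ∀ c : Fin n, blockSize S c ≤ 2) {c : ℕ}
    (hc : inT S c) : g S (rk S c) = c := by
  have hrk := rk_eq S hS hc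
  have hc' := hc
  unfold inT at hc'
  have hkk : kk S (rk S c) = c / 2 := by
    have hle : kk S (rk S c) ≤ c / 2 := kk_le S (by omega)
    by_contra h
    have hlt : kk S (rk S c) < c / 2 := by omega
    have h2 := kk_spec S (rk_lt S hS hc)
    have h3 : a S (kk S (rk S c) + 1) ≤ a S (c / 2) := a_mono S (by omega)
    omega
  unfold g
  rw [hkk, hrk]
  omega

lemma card_fin {m : ℕ} {P : Fin m → Prop} {Q : ℕ → Prop} [DecidablePred P] [DecidablePred Q]
    (h : ∀ c : Fin m, P c ↔ Q c.val) :
    (Finset.univ.filter P).card = ((Finset.range m).filter Q).card := by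
  apply Finset.card_bij (fun c _ => c.val)
  · intro c hc
    simp only [mem_filter, mem_univ, true_and] at hc
    simp only [mem_filter, mem_range]
    exact ⟨c.isLt, (h c).mp hc⟩
  · intro c1 _ c2 _ hcc
    exact Fin.ext hcc
  · intro c hc
    simp only [mem_filter, mem_range] at hc
    exact ⟨⟨c, hc.1⟩, by simp only [mem_filter, mem_univ, true_and]; exact (h _).mpr hc.2, rfl⟩

end ULAProof

/-- For every full rook placement `S` on a Young diagram with `n` rows all of
whose blocks have size at most `2`, there is a unique left-aligned rook
placement `R` on the double staircase `2δ_n` projecting to `S`. -/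
theorem unique_left_aligned_in_fiber (n : ℕ) (S : FullPlacement n)
    (hS : ∀ c : Fin n, blockSize S c ≤ 2) :
    ∃! R : RookPlacement n, LeftAligned R ∧ Projects R S := by
  classical
  open ULAProof in
  have hbij := S.2.2.1
  have hrow : ∀ i : Fin n, (S.1.2 i : ℕ) < (S.1.1 i : ℕ) := S.2.2.2
  -- construction of the canonical left-aligned placement
  have hrinj : Function.Injective
      (fun i : Fin n => (⟨g S (S.1.2 i), g_lt S hS (S.1.2 i).isLt⟩ : Fin (2 * n))) := by
    intro i j h
    have h1 : g S ((S.1.2 i : ℕ)) = g S ((S.1.2 j : ℕ)) := congrArg Fin.val h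
    have h2 : ((S.1.2 i : ℕ)) = ((S.1.2 j : ℕ)) := by
      rw [← rk_g S hS (S.1.2 i).isLt, ← rk_g S hS (S.1.2 j).isLt, h1]
    exact hbij.1 (Fin.ext h2)
  have hrowR : ∀ i : Fin n,
      ((⟨g S (S.1.2 i), g_lt S hS (S.1.2 i).isLt⟩ : Fin (2 * n)) : ℕ) < 2 * (i.val + 1) := by
    intro i
    have h1 : (S.1.2 i : ℕ) < a S (i.val + 1) := by rw [a_succ_fin]; exact hrow i
    have h2 : kk S ((S.1.2 i : ℕ)) ≤ i.val := kk_le S h1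
    have h3 := g_sub_le S hS (S.1.2 i).isLt
    show g S (S.1.2 i) < 2 * (i.val + 1)
    unfold ULAProof.g
    omega
  set R : RookPlacement n :=
    ⟨fun i => ⟨g S (S.1.2 i), g_lt S hS (S.1.2 i).isLt⟩, hrinj, hrowR⟩ with hR
  have hOcc : ∀ c : ℕ, Occupied R c ↔ (inT S c ∧ c < 2 * n) := by
    intro c
    constructor
    · rintro ⟨j, hj⟩
      have hc : c = g S (S.1.2 j) := hj.symm
      subst hc
      exact ⟨inT_g S hS (S.1.2 j).isLt, g_lt S hS (S.1.2 j).isLt⟩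
    · rintro ⟨hc, hlt⟩
      obtain ⟨j, hj⟩ := hbij.2 ⟨rk S c, rk_lt S hS hc⟩
      refine ⟨j, ?_⟩
      show g S ((S.1.2 j : ℕ)) = c
      rw [hj]
      exact g_rk S hS hc
  have hproj : Projects R S := by
    constructor
    · intro i
      rw [card_fin (Q := fun c => Occupied R c ∧ c < 2 * (i.val + 1)) (fun c => Iff.rfl)]
      have hset : ((Finset.range (2 * n)).filter (fun c => Occupied R c ∧ c < 2 * (i.val + 1)))
          = ((Finset.range (2 * (i.val + 1))).filter (fun c => inT S c)) := by
        ext c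
        simp only [Finset.mem_filter, Finset.mem_range]
        constructor
        · rintro ⟨h1, h2, h3⟩
          exact ⟨h3, ((hOcc c).mp h2).1⟩
        · rintro ⟨h1, h2⟩
          have hn : c < 2 * n := by have := i.isLt; omega
          exact ⟨hn, (hOcc c).mpr ⟨h2, hn⟩, h1⟩
      rw [hset]
      show (S.1.1 i : ℕ) = rk S (2 * (i.val + 1))
      rw [rk_two_mul S hS, a_succ_fin]
    · intro i
      rw [card_fin (Q := fun c => Occupied R c ∧ c < (R.1 i : ℕ)) (fun c => Iff.rfl)]
      have hset : ((Finset.range (2 * n)).filter (fun c => Occupied R c ∧ c < (R.1 i : ℕ)))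
          = ((Finset.range ((R.1 i : ℕ))).filter (fun c => inT S c)) := by
        ext c
        simp only [Finset.mem_filter, Finset.mem_range]
        constructor
        · rintro ⟨h1, h2, h3⟩
          exact ⟨h3, ((hOcc c).mp h2).1⟩
        · rintro ⟨h1, h2⟩
          have hn : c < 2 * n := Nat.lt_trans h1 (R.1 i).isLt
          exact ⟨hn, (hOcc c).mpr ⟨h2, hn⟩, h1⟩
      rw [hset]
      show (S.1.2 i : ℕ) = rk S ((R.1 i : ℕ))
      show (S.1.2 i : ℕ) = rk S (g S (S.1.2 i))
      rw [rk_g S hS (S.1.2 i).isLt]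
  have hLA : LeftAligned R := by
    intro i hocc
    rw [hOcc] at hocc
    obtain ⟨hT, hlt⟩ := hocc
    rw [hOcc]
    refine ⟨?_, by omega⟩
    rw [inT_two_mul_add_one] at hT
    rw [inT_two_mul]
    omega
  refine ⟨R, ⟨hLA, hproj⟩, ?_⟩
  rintro R' ⟨hLA', hproj'⟩
  -- occupied columns of R' agree with inT
  have hcnt : ∀ i : Fin n,
      ((Finset.range (2 * (i.val + 1))).filter (fun c => Occupied R' c)).card
        = a S (i.val + 1) := by
    intro i
    have hthis := hproj'.1 i
    rw [card_fin (Q := fun c => Occupied R' c ∧ c < 2 * (i.val + 1)) (fun c => Iff.rfl)] at hthis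
    have hset : ((Finset.range (2 * n)).filter (fun c => Occupied R' c ∧ c < 2 * (i.val + 1)))
        = ((Finset.range (2 * (i.val + 1))).filter (fun c => Occupied R' c)) := by
      ext c
      simp only [Finset.mem_filter, Finset.mem_range]
      constructor
      · rintro ⟨h1, h2, h3⟩
        exact ⟨h3, h2⟩
      · rintro ⟨h1, h2⟩
        have := i.isLt
        exact ⟨by omega, h2, h1⟩
    rw [hset] at hthis
    rw [a_succ_fin]
    exact hthis.symm
  have hOcc' : ∀ c, c < 2 * n → (Occupied R' c ↔ inT S c) := by
    intro c hc
    obtain ⟨k, hkn, hke⟩ : ∃ k, k < n ∧ (c = 2 * k ∨ c = 2 * k + 1) :=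
      ⟨c / 2, by omega, by omega⟩
    have h1 : ((Finset.range (2 * k)).filter (fun c' => Occupied R' c')).card
        = a S k := by
      rcases Nat.eq_zero_or_pos k with h0 | h0
      · rw [h0]; simp [a_zero]
      · have := hcnt ⟨k - 1, by omega⟩
        simpa [show (k - 1) + 1 = k by omega] using this
    have h2 : ((Finset.range (2 * (k + 1))).filter (fun c' => Occupied R' c')).card
        = a S (k + 1) := hcnt ⟨k, hkn⟩
    have hsplit : ((Finset.range (2 * (k + 1))).filter (fun c' => Occupied R' c')).card
        = ((Finset.range (2 * k)).filter (fun c' => Occupied R' c')).card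
          + (if Occupied R' (2 * k) then 1 else 0)
          + (if Occupied R' (2 * k + 1) then 1 else 0) := by
      rw [show 2 * (k + 1) = (2 * k + 1) + 1 by ring, cnt_succ, cnt_succ]
    have hLAk : Occupied R' (2 * k + 1) → Occupied R' (2 * k) := hLA' ⟨k, hkn⟩
    have hmono := a_le_succ S k
    rcases hke with he | he <;> subst he
    · rw [inT_two_mul S k]
      by_cases hA : Occupied R' (2 * k) <;> by_cases hB : Occupied R' (2 * k + 1) <;>
          simp only [hA, hB, if_true, if_false, true_iff, false_iff, not_lt] at hsplit ⊢
      · omega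
      · omega
      · exact absurd (hLAk hB) hA
      · omega
    · rw [inT_two_mul_add_one S k]
      by_cases hA : Occupied R' (2 * k) <;> by_cases hB : Occupied R' (2 * k + 1) <;>
          simp only [hA, hB, if_true, if_false, true_iff, false_iff, not_lt] at hsplit ⊢
      · omega
      · omega
      · exact absurd (hLAk hB) hA
      · omega
  -- conclude R' = R
  refine Subtype.ext (funext fun i => Fin.ext ?_)
  have hc' : Occupied R' ((R'.1 i : ℕ)) := ⟨i, rfl⟩
  have hlt' : (R'.1 i : ℕ) < 2 * n := (R'.1 i).isLt
  have hT' : inT S ((R'.1 i : ℕ)) := (hOcc' _ hlt').mp hc'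
  have hrk' : rk S ((R'.1 i : ℕ)) = (S.1.2 i : ℕ) := by
    have hthis := hproj'.2 i
    rw [card_fin (Q := fun c => Occupied R' c ∧ c < (R'.1 i : ℕ)) (fun c => Iff.rfl)] at hthis
    have hset : ((Finset.range (2 * n)).filter (fun c => Occupied R' c ∧ c < (R'.1 i : ℕ)))
        = ((Finset.range ((R'.1 i : ℕ))).filter (fun c => inT S c)) := by
      ext c
      simp only [Finset.mem_filter, Finset.mem_range]
      constructor
      · rintro ⟨h1, h2, h3⟩
        exact ⟨h3, (hOcc' c h1).mp h2⟩
      · rintro ⟨h1, h2⟩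
        have hn : c < 2 * n := by omega
        exact ⟨hn, (hOcc' c hn).mpr h2, h1⟩
    rw [hset] at hthis
    exact hthis.symm
  have hT2 : inT S (g S ((S.1.2 i : ℕ))) := inT_g S hS (S.1.2 i).isLt
  have hrk2 : rk S (g S ((S.1.2 i : ℕ))) = (S.1.2 i : ℕ) := rk_g S hS (S.1.2 i).isLt
  show (R'.1 i : ℕ) = g S ((S.1.2 i : ℕ))
  exact rk_injOn S hT' hT2 (by rw [hrk', hrk2])
end
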